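/- arXiv:2104.13796 — 6 statements merged into one kernel-verified Lean document; each statement's English description precedes it below -/
import Mathlib

section
/- Fix t ∈ ℝ and K > 0. Let A_N⁰ : ℝ × ℝ → ℂ (for N ∈ ℕ) and A : ℝ × ℝ → ℂ be jointly measurable functions such that: (a) for every s ∈ ℝ, ∫_ℝ |A_N⁰(N(t + s/(2N)), μ) − A(t, μ)|² dμ → 0 and ∫_ℝ |A_N⁰(N(t − s/(2N)), μ) − A(t, μ)|² dμ → 0 as N → ∞; (b) for every r ∈ ℝ and N ∈ ℕ, μ ↦ A_N⁰(r, μ) and μ ↦ A(t, μ) lie in L²(ℝ) with L²-norm at most K; (c) for every r ∈ ℝ and N ∈ ℕ, μ ↦ A_N⁰(r, μ) and μ ↦ A(t, μ) are differentiable everywhere and their derivatives μ ↦ ∂_μ A_N⁰(r, μ) and μ ↦ ∂_μ A(t, μ) lie in L²(ℝ) with L²-norm at most K. Then, as N → ∞, ∫_ℝ | ∫_ℝ e^{iμs} ( A_N⁰(N(t + s/(2N)), μ) · conj(A_N⁰(N(t − s/(2N)), μ)) − A(t, μ) · conj(A(t, μ)) ) dμ |² ds → 0. (Note that each inner integral over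 μ converges absolutely by the Cauchy–Schwarz inequality, since it is the integral of a difference of products of L² functions.) -/
open MeasureTheory Filter

section WignerVilleAux
open Complex Real FourierTransform
open scoped ENNReal
noncomputable section

namespace WVaux

lemma eLpNorm_conj' (g : ℝ → ℂ) :
    eLpNorm (fun μ => (starRingEnd ℂ) (g μ)) 2 (volume : Measure ℝ) =
      eLpNorm g 2 (volume : Measure ℝ) :=
  eLpNorm_congr_norm_ae (Eventually.of_forall fun _ => RCLike.norm_conj _)

lemma memL2_conj {g : ℝ → ℂ} (hg : MemLp g 2 (volume : Measure ℝ)) :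
    MemLp (fun μ => (starRingEnd ℂ) (g μ)) 2 (volume : Measure ℝ) :=
  ⟨Complex.continuous_conj.comp_aestronglyMeasurable hg.1, by
    rw [eLpNorm_conj']; exact hg.2⟩

lemma half_add_half : (1 : ℝ≥0∞) / 1 = 1 / 2 + 1 / 2 := by
  rw [ENNReal.add_halves, div_one]

lemma smul_eq_mul_fun (f g : ℝ → ℂ) :
    (f • g : ℝ → ℂ) =ᵐ[(volume : Measure ℝ)] fun μ => f μ * g μ :=
  Filter.Eventually.of_forall fun μ => by rw [Pi.smul_apply', smul_eq_mul]

lemma integrable_mul_L2 {f g : ℝ → ℂ} (hf : MemLp f 2 (volume : Measure ℝ))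
    (hg : MemLp g 2 (volume : Measure ℝ)) :
    Integrable (fun μ => f μ * g μ) (volume : Measure ℝ) := by
  have h := hg.smul (φ := f) (r := 1) hf
  exact (memLp_one_iff_integrable.mp h).congr (smul_eq_mul_fun f g)

lemma integral_norm_mul_le {f g : ℝ → ℂ} (hf : MemLp f 2 (volume : Measure ℝ))
    (hg : MemLp g 2 (volume : Measure ℝ)) {Kf Kg : ℝ} (hKf0 : 0 ≤ Kf) (hKg0 : 0 ≤ Kg)
    (hKf : eLpNorm f 2 (volume : Measure ℝ) ≤ ENNReal.ofReal Kf)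
    (hKg : eLpNorm g 2 (volume : Measure ℝ) ≤ ENNReal.ofReal Kg) :
    ∫ μ : ℝ, ‖f μ * g μ‖ ≤ Kf * Kg := by
  have hint := integrable_mul_L2 hf hg
  have h1 : eLpNorm (fun μ => f μ * g μ) 1 (volume : Measure ℝ) ≤
      eLpNorm f 2 (volume : Measure ℝ) * eLpNorm g 2 (volume : Measure ℝ) := by
    have h0 := eLpNorm_smul_le_mul_eLpNorm (μ := (volume : Measure ℝ)) (p := 2) (q := 2) (r := 1) hg.1 hf.1
    rwa [eLpNorm_congr_ae (smul_eq_mul_fun f g)] at h0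
  calc ∫ μ : ℝ, ‖f μ * g μ‖
      = (eLpNorm (fun μ => f μ * g μ) 1 (volume : Measure ℝ)).toReal := by
        rw [eLpNorm_one_eq_lintegral_enorm, integral_norm_eq_lintegral_enorm hint.1]
    _ ≤ (ENNReal.ofReal Kf * ENNReal.ofReal Kg).toReal := by
        refine ENNReal.toReal_mono (ENNReal.mul_ne_top ENNReal.ofReal_ne_top ENNReal.ofReal_ne_top)
          (h1.trans (mul_le_mul' hKf hKg))
    _ = Kf * Kg := by
        rw [← ENNReal.ofReal_mul hKf0, ENNReal.toReal_ofReal (by positivity)]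

lemma eLpNorm_two_eq {f : ℝ → ℂ} (hf : MemLp f 2 (volume : Measure ℝ)) :
    eLpNorm f 2 (volume : Measure ℝ) =
      ENNReal.ofReal (Real.sqrt (∫ μ : ℝ, ‖f μ‖ ^ 2)) := by
  rw [hf.eLpNorm_eq_integral_rpow_norm two_ne_zero ENNReal.ofNat_ne_top]
  congr 1
  have h2 : ((2 : ℝ≥0∞)).toReal = (2 : ℝ) := by simp
  rw [h2, Real.sqrt_eq_rpow]
  have h3 : (∫ μ : ℝ, ‖f μ‖ ^ (2:ℝ)) = ∫ μ : ℝ, ‖f μ‖ ^ (2:ℕ) := by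
    refine integral_congr_ae (Filter.Eventually.of_forall fun μ => ?_)
    show ‖f μ‖ ^ (2:ℝ) = ‖f μ‖ ^ (2:ℕ)
    rw [← Real.rpow_natCast ‖f μ‖ 2]
    norm_num
  rw [h3]
  norm_num


lemma hasDerivAt_mul_conj {f g : ℝ → ℂ} (hf : ∀ μ : ℝ, DifferentiableAt ℝ f μ)
    (hg : ∀ μ : ℝ, DifferentiableAt ℝ g μ) (μ : ℝ) :
    HasDerivAt (fun x => f x * (starRingEnd ℂ) (g x))
      (deriv f μ * (starRingEnd ℂ) (g μ) + f μ * (starRingEnd ℂ) (deriv g μ)) μ := by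
  have h1 := (hf μ).hasDerivAt
  have h2 := (hg μ).hasDerivAt.star
  have h3 := h1.mul h2
  simp only [starRingEnd_apply]
  exact h3

lemma J_eq_fourier (h : ℝ → ℂ) (s : ℝ) :
    (∫ μ : ℝ, Complex.exp (Complex.I * μ * s) * h μ) = 𝓕 h (-s / (2 * π)) := by
  rw [Real.fourier_real_eq_integral_exp_smul]
  congr 1
  funext μ
  rw [smul_eq_mul]
  congr 1
  have hπ : (π : ℝ) ≠ 0 := Real.pi_ne_zero
  have harg : (-2 * π * μ * (-s / (2 * π)) : ℝ) = μ * s := by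
    field_simp
  rw [harg]
  push_cast
  ring

lemma norm_J_le (h : ℝ → ℂ) (s : ℝ) :
    ‖∫ μ : ℝ, Complex.exp (Complex.I * μ * s) * h μ‖ ≤ ∫ μ : ℝ, ‖h μ‖ := by
  refine le_trans (norm_integral_le_integral_norm _) (le_of_eq ?_)
  refine integral_congr_ae (Filter.Eventually.of_forall fun μ => ?_)
  show ‖Complex.exp (Complex.I * μ * s) * h μ‖ = ‖h μ‖
  rw [norm_mul]
  have : ‖Complex.exp (Complex.I * μ * s)‖ = 1 := by
    rw [Complex.norm_exp]
    simp [Complex.mul_re]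
  rw [this, one_mul]

lemma norm_fourier_le (h : ℝ → ℂ) (w : ℝ) : ‖𝓕 h w‖ ≤ ∫ μ : ℝ, ‖h μ‖ :=
  VectorFourier.norm_fourierIntegral_le_integral_norm _ _ _ _ _

lemma norm_J_decay {h : ℝ → ℂ} (hint : Integrable h (volume : Measure ℝ))
    (hdiff : Differentiable ℝ h) (hint' : Integrable (deriv h) (volume : Measure ℝ)) (s : ℝ) :
    |s| * ‖∫ μ : ℝ, Complex.exp (Complex.I * μ * s) * h μ‖ ≤ ∫ μ : ℝ, ‖deriv h μ‖ := by
  rw [J_eq_fourier]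
  have key := Real.fourier_deriv hint hdiff hint'
  have h1 : ‖𝓕 (deriv h) (-s / (2 * π))‖ ≤ ∫ μ : ℝ, ‖deriv h μ‖ := norm_fourier_le _ _
  rw [key, norm_smul] at h1
  have e1 : ‖(2 * ↑π * Complex.I * ((-s / (2 * π) : ℝ) : ℂ))‖ = |s| := by
    simp only [norm_mul, Complex.norm_I, mul_one, Complex.norm_real, Real.norm_eq_abs,
      Complex.norm_ofNat]
    rw [abs_of_pos Real.pi_pos, abs_div, abs_neg, abs_of_pos (by positivity : (0:ℝ) < 2 * π)]
    field_simp
  rwa [e1] at h1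


lemma pair_bound {K : ℝ} (hK : 0 ≤ K) {f g u v : ℝ → ℂ}
    (hfm : MemLp f 2 (volume : Measure ℝ)) (hgm : MemLp g 2 (volume : Measure ℝ))
    (hum : MemLp u 2 (volume : Measure ℝ)) (hvm : MemLp v 2 (volume : Measure ℝ))
    (hfb : eLpNorm f 2 (volume : Measure ℝ) ≤ ENNReal.ofReal K)
    (hgb : eLpNorm g 2 (volume : Measure ℝ) ≤ ENNReal.ofReal K)
    (hub : eLpNorm u 2 (volume : Measure ℝ) ≤ ENNReal.ofReal K)
    (hvb : eLpNorm v 2 (volume : Measure ℝ) ≤ ENNReal.ofReal K)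
    (hfd : ∀ μ : ℝ, DifferentiableAt ℝ f μ) (hgd : ∀ μ : ℝ, DifferentiableAt ℝ g μ)
    (hud : ∀ μ : ℝ, DifferentiableAt ℝ u μ) (hvd : ∀ μ : ℝ, DifferentiableAt ℝ v μ)
    (hf'm : MemLp (deriv f) 2 (volume : Measure ℝ))
    (hg'm : MemLp (deriv g) 2 (volume : Measure ℝ))
    (hu'm : MemLp (deriv u) 2 (volume : Measure ℝ))
    (hv'm : MemLp (deriv v) 2 (volume : Measure ℝ))
    (hf'b : eLpNorm (deriv f) 2 (volume : Measure ℝ) ≤ ENNReal.ofReal K)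
    (hg'b : eLpNorm (deriv g) 2 (volume : Measure ℝ) ≤ ENNReal.ofReal K)
    (hu'b : eLpNorm (deriv u) 2 (volume : Measure ℝ) ≤ ENNReal.ofReal K)
    (hv'b : eLpNorm (deriv v) 2 (volume : Measure ℝ) ≤ ENNReal.ofReal K)
    (s : ℝ) :
    ‖∫ μ : ℝ, Complex.exp (Complex.I * μ * s) *
        (f μ * (starRingEnd ℂ) (g μ) - u μ * (starRingEnd ℂ) (v μ))‖ ^ 2
      ≤ 20 * K ^ 4 * (1 / (1 + s ^ 2)) := by
  set h : ℝ → ℂ := fun μ => f μ * (starRingEnd ℂ) (g μ) - u μ * (starRingEnd ℂ) (v μ) with hh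
  have hPfg : Integrable (fun μ => f μ * (starRingEnd ℂ) (g μ)) (volume : Measure ℝ) :=
    integrable_mul_L2 hfm (memL2_conj hgm)
  have hPuv : Integrable (fun μ => u μ * (starRingEnd ℂ) (v μ)) (volume : Measure ℝ) :=
    integrable_mul_L2 hum (memL2_conj hvm)
  have hint : Integrable h (volume : Measure ℝ) := hPfg.sub hPuv
  have bfg : ∫ μ : ℝ, ‖f μ * (starRingEnd ℂ) (g μ)‖ ≤ K * K :=
    integral_norm_mul_le hfm (memL2_conj hgm) hK hK hfb (by rw [eLpNorm_conj']; exact hgb)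
  have buv : ∫ μ : ℝ, ‖u μ * (starRingEnd ℂ) (v μ)‖ ≤ K * K :=
    integral_norm_mul_le hum (memL2_conj hvm) hK hK hub (by rw [eLpNorm_conj']; exact hvb)
  have bh : ∫ μ : ℝ, ‖h μ‖ ≤ 2 * K ^ 2 := by
    have step : ∫ μ : ℝ, ‖h μ‖ ≤ ∫ μ : ℝ,
        (‖f μ * (starRingEnd ℂ) (g μ)‖ + ‖u μ * (starRingEnd ℂ) (v μ)‖) :=
      integral_mono hint.norm (hPfg.norm.add hPuv.norm) (fun μ => norm_sub_le _ _)
    rw [integral_add hPfg.norm hPuv.norm] at step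
    nlinarith [step, bfg, buv]
  have hDfg := hasDerivAt_mul_conj hfd hgd
  have hDuv := hasDerivAt_mul_conj hud hvd
  have hD : ∀ μ : ℝ, HasDerivAt h
      ((deriv f μ * (starRingEnd ℂ) (g μ) + f μ * (starRingEnd ℂ) (deriv g μ)) -
        (deriv u μ * (starRingEnd ℂ) (v μ) + u μ * (starRingEnd ℂ) (deriv v μ))) μ :=
    fun μ => (hDfg μ).sub (hDuv μ)
  have hdiff : Differentiable ℝ h := fun μ => (hD μ).differentiableAt
  have hderiv : deriv h = fun μ =>
      (deriv f μ * (starRingEnd ℂ) (g μ) + f μ * (starRingEnd ℂ) (deriv g μ)) -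
        (deriv u μ * (starRingEnd ℂ) (v μ) + u μ * (starRingEnd ℂ) (deriv v μ)) :=
    funext fun μ => (hD μ).deriv
  have i1 : Integrable (fun μ => deriv f μ * (starRingEnd ℂ) (g μ)) (volume : Measure ℝ) :=
    integrable_mul_L2 hf'm (memL2_conj hgm)
  have i2 : Integrable (fun μ => f μ * (starRingEnd ℂ) (deriv g μ)) (volume : Measure ℝ) :=
    integrable_mul_L2 hfm (memL2_conj hg'm)
  have i3 : Integrable (fun μ => deriv u μ * (starRingEnd ℂ) (v μ)) (volume : Measure ℝ) :=
    integrable_mul_L2 hu'm (memL2_conj hvm)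
  have i4 : Integrable (fun μ => u μ * (starRingEnd ℂ) (deriv v μ)) (volume : Measure ℝ) :=
    integrable_mul_L2 hum (memL2_conj hv'm)
  have hint' : Integrable (deriv h) (volume : Measure ℝ) := by
    rw [hderiv]; exact (i1.add i2).sub (i3.add i4)
  have c1 : ∫ μ : ℝ, ‖deriv f μ * (starRingEnd ℂ) (g μ)‖ ≤ K * K :=
    integral_norm_mul_le hf'm (memL2_conj hgm) hK hK hf'b (by rw [eLpNorm_conj']; exact hgb)
  have c2 : ∫ μ : ℝ, ‖f μ * (starRingEnd ℂ) (deriv g μ)‖ ≤ K * K :=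
    integral_norm_mul_le hfm (memL2_conj hg'm) hK hK hfb (by rw [eLpNorm_conj']; exact hg'b)
  have c3 : ∫ μ : ℝ, ‖deriv u μ * (starRingEnd ℂ) (v μ)‖ ≤ K * K :=
    integral_norm_mul_le hu'm (memL2_conj hvm) hK hK hu'b (by rw [eLpNorm_conj']; exact hvb)
  have c4 : ∫ μ : ℝ, ‖u μ * (starRingEnd ℂ) (deriv v μ)‖ ≤ K * K :=
    integral_norm_mul_le hum (memL2_conj hv'm) hK hK hub (by rw [eLpNorm_conj']; exact hv'b)
  have bD : ∫ μ : ℝ, ‖deriv h μ‖ ≤ 4 * K ^ 2 := by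
    rw [hderiv]
    have step : ∫ μ : ℝ, ‖(deriv f μ * (starRingEnd ℂ) (g μ) + f μ * (starRingEnd ℂ) (deriv g μ)) -
        (deriv u μ * (starRingEnd ℂ) (v μ) + u μ * (starRingEnd ℂ) (deriv v μ))‖ ≤
        ∫ μ : ℝ, ((‖deriv f μ * (starRingEnd ℂ) (g μ)‖ + ‖f μ * (starRingEnd ℂ) (deriv g μ)‖) +
          (‖deriv u μ * (starRingEnd ℂ) (v μ)‖ + ‖u μ * (starRingEnd ℂ) (deriv v μ)‖)) :=
      by
        have k1 : Integrable (fun μ : ℝ => ‖deriv f μ * (starRingEnd ℂ) (g μ)‖)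
          (volume : Measure ℝ) := i1.norm
        have k2 : Integrable (fun μ : ℝ => ‖f μ * (starRingEnd ℂ) (deriv g μ)‖)
          (volume : Measure ℝ) := i2.norm
        have k3 : Integrable (fun μ : ℝ => ‖deriv u μ * (starRingEnd ℂ) (v μ)‖)
          (volume : Measure ℝ) := i3.norm
        have k4 : Integrable (fun μ : ℝ => ‖u μ * (starRingEnd ℂ) (deriv v μ)‖)
          (volume : Measure ℝ) := i4.norm
        exact integral_mono ((i1.add i2).sub (i3.add i4)).norm
          ((k1.add k2).add (k3.add k4))
          (fun μ => (norm_sub_le _ _).trans (add_le_add (norm_add_le _ _) (norm_add_le _ _)))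
    have k1 : Integrable (fun μ : ℝ => ‖deriv f μ * (starRingEnd ℂ) (g μ)‖)
      (volume : Measure ℝ) := i1.norm
    have k2 : Integrable (fun μ : ℝ => ‖f μ * (starRingEnd ℂ) (deriv g μ)‖)
      (volume : Measure ℝ) := i2.norm
    have k3 : Integrable (fun μ : ℝ => ‖deriv u μ * (starRingEnd ℂ) (v μ)‖)
      (volume : Measure ℝ) := i3.norm
    have k4 : Integrable (fun μ : ℝ => ‖u μ * (starRingEnd ℂ) (deriv v μ)‖)
      (volume : Measure ℝ) := i4.norm
    have j12 : Integrable (fun μ : ℝ => ‖deriv f μ * (starRingEnd ℂ) (g μ)‖ +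
        ‖f μ * (starRingEnd ℂ) (deriv g μ)‖) (volume : Measure ℝ) := k1.add k2
    have j34 : Integrable (fun μ : ℝ => ‖deriv u μ * (starRingEnd ℂ) (v μ)‖ +
        ‖u μ * (starRingEnd ℂ) (deriv v μ)‖) (volume : Measure ℝ) := k3.add k4
    rw [integral_add j12 j34, integral_add k1 k2, integral_add k3 k4] at step
    nlinarith [step, c1, c2, c3, c4]
  have B1 : ‖∫ μ : ℝ, Complex.exp (Complex.I * μ * s) * h μ‖ ≤ 2 * K ^ 2 :=
    (norm_J_le h s).trans bh
  have B2 : |s| * ‖∫ μ : ℝ, Complex.exp (Complex.I * μ * s) * h μ‖ ≤ 4 * K ^ 2 :=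
    (norm_J_decay hint hdiff hint' s).trans bD
  set X : ℝ := ‖∫ μ : ℝ, Complex.exp (Complex.I * μ * s) * h μ‖ with hX
  have hX0 : (0:ℝ) ≤ X := norm_nonneg _
  have e1 : X ^ 2 ≤ (2 * K ^ 2) ^ 2 := by nlinarith [B1, hX0]
  have e2 : s ^ 2 * X ^ 2 ≤ (4 * K ^ 2) ^ 2 := by
    have h5 : (|s| * X) ^ 2 ≤ (4 * K ^ 2) ^ 2 := by
      have h6 : (0:ℝ) ≤ |s| * X := mul_nonneg (abs_nonneg s) hX0
      nlinarith [B2, h6]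
    rwa [mul_pow, _root_.sq_abs] at h5
  rw [mul_one_div, le_div_iff₀ (by positivity : (0:ℝ) < 1 + s ^ 2)]
  nlinarith [e1, e2]


lemma meas_F (t : ℝ) (A0 : ℕ → ℝ → ℝ → ℂ) (A : ℝ → ℝ → ℂ)
    (hmeasN : ∀ N : ℕ, Measurable (Function.uncurry (A0 N)))
    (hmeasA : Measurable (Function.uncurry A)) (N : ℕ) :
    AEStronglyMeasurable (fun s : ℝ =>
      ‖∫ μ : ℝ, Complex.exp (Complex.I * μ * s) *
        (A0 N ((N : ℝ) * (t + s / (2 * (N : ℝ)))) μ *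
            (starRingEnd ℂ) (A0 N ((N : ℝ) * (t - s / (2 * (N : ℝ)))) μ) -
          A t μ * (starRingEnd ℂ) (A t μ))‖ ^ 2) (volume : Measure ℝ) := by
  have c1 : Measurable fun p : ℝ × ℝ =>
      (((N : ℝ) * (t + p.1 / (2 * (N : ℝ))), p.2) : ℝ × ℝ) := by fun_prop
  have c2 : Measurable fun p : ℝ × ℝ =>
      (((N : ℝ) * (t - p.1 / (2 * (N : ℝ))), p.2) : ℝ × ℝ) := by fun_prop
  have c3 : Measurable fun p : ℝ × ℝ => ((t, p.2) : ℝ × ℝ) := by fun_prop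
  have mplus : Measurable fun p : ℝ × ℝ =>
      A0 N ((N : ℝ) * (t + p.1 / (2 * (N : ℝ)))) p.2 := (hmeasN N).comp c1
  have mminus : Measurable fun p : ℝ × ℝ =>
      A0 N ((N : ℝ) * (t - p.1 / (2 * (N : ℝ)))) p.2 := (hmeasN N).comp c2
  have mA : Measurable fun p : ℝ × ℝ => A t p.2 := hmeasA.comp c3
  have me : Measurable fun p : ℝ × ℝ => Complex.exp (Complex.I * p.2 * p.1) := by
    apply Complex.measurable_exp.comp
    fun_prop
  have m0 : Measurable fun p : ℝ × ℝ => Complex.exp (Complex.I * p.2 * p.1) *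
      (A0 N ((N : ℝ) * (t + p.1 / (2 * (N : ℝ)))) p.2 *
          (starRingEnd ℂ) (A0 N ((N : ℝ) * (t - p.1 / (2 * (N : ℝ)))) p.2) -
        A t p.2 * (starRingEnd ℂ) (A t p.2)) :=
    me.mul ((mplus.mul (Complex.continuous_conj.measurable.comp mminus)).sub
      (mA.mul (Complex.continuous_conj.measurable.comp mA)))
  have m1 : StronglyMeasurable fun s : ℝ => ∫ μ : ℝ, Complex.exp (Complex.I * μ * s) *
      (A0 N ((N : ℝ) * (t + s / (2 * (N : ℝ)))) μ *
          (starRingEnd ℂ) (A0 N ((N : ℝ) * (t - s / (2 * (N : ℝ)))) μ) -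
        A t μ * (starRingEnd ℂ) (A t μ)) :=
    m0.stronglyMeasurable.integral_prod_right'
  exact ((continuous_pow 2).comp_stronglyMeasurable m1.norm).aestronglyMeasurable

end WVaux

end
end WignerVilleAux


open WVaux in
/-- Analytic core of Theorem 5.2 (convergence of the Wigner–Ville spectrum): under
L²-convergence of the rescaled transfer functions towards the limiting transfer function and
uniform L²-bounds on the transfer functions and their derivatives, the L²-distance (in `s`)
between the product `A_N⁰ · conj A_N⁰` and `|A(t,·)|²`, measured after taking the inner Fourier
integral in `μ`, tends to zero. -/
theorem wigner_ville_spectrum_core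
    (t K : ℝ) (hK : 0 < K)
    (A0 : ℕ → ℝ → ℝ → ℂ) (A : ℝ → ℝ → ℂ)
    (hmeasN : ∀ N : ℕ, Measurable (Function.uncurry (A0 N)))
    (hmeasA : Measurable (Function.uncurry A))
    (hconv_plus : ∀ s : ℝ, Tendsto
      (fun N : ℕ => ∫ μ : ℝ, ‖A0 N ((N : ℝ) * (t + s / (2 * (N : ℝ)))) μ - A t μ‖ ^ 2)
      atTop (nhds 0))
    (hconv_minus : ∀ s : ℝ, Tendsto
      (fun N : ℕ => ∫ μ : ℝ, ‖A0 N ((N : ℝ) * (t - s / (2 * (N : ℝ)))) μ - A t μ‖ ^ 2)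
      atTop (nhds 0))
    (hL2N : ∀ (r : ℝ) (N : ℕ), 1 ≤ N → MemLp (A0 N r) 2 (volume : Measure ℝ) ∧
      eLpNorm (A0 N r) 2 (volume : Measure ℝ) ≤ ENNReal.ofReal K)
    (hL2A : MemLp (A t) 2 (volume : Measure ℝ) ∧
      eLpNorm (A t) 2 (volume : Measure ℝ) ≤ ENNReal.ofReal K)
    (hdiffN : ∀ (r : ℝ) (N : ℕ), 1 ≤ N → ∀ μ : ℝ, DifferentiableAt ℝ (A0 N r) μ)
    (hderivL2N : ∀ (r : ℝ) (N : ℕ), 1 ≤ N →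
      MemLp (deriv (A0 N r)) 2 (volume : Measure ℝ) ∧
        eLpNorm (deriv (A0 N r)) 2 (volume : Measure ℝ) ≤ ENNReal.ofReal K)
    (hdiffA : ∀ μ : ℝ, DifferentiableAt ℝ (A t) μ)
    (hderivL2A : MemLp (deriv (A t)) 2 (volume : Measure ℝ) ∧
      eLpNorm (deriv (A t)) 2 (volume : Measure ℝ) ≤ ENNReal.ofReal K) :
    Tendsto (fun N : ℕ => ∫ s : ℝ,
      ‖∫ μ : ℝ, Complex.exp (Complex.I * μ * s) *
        (A0 N ((N : ℝ) * (t + s / (2 * (N : ℝ)))) μ *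
            (starRingEnd ℂ) (A0 N ((N : ℝ) * (t - s / (2 * (N : ℝ)))) μ) -
          A t μ * (starRingEnd ℂ) (A t μ))‖ ^ 2) atTop (nhds 0) := by
  have hK0 : (0:ℝ) ≤ K := hK.le
  have bound_int : Integrable (fun s : ℝ => 20 * K ^ 4 * (1 / (1 + s ^ 2)))
      (volume : Measure ℝ) := by
    simpa [one_div] using integrable_inv_one_add_sq.const_mul (20 * K ^ 4)
  have hmeas : ∀ᶠ N : ℕ in atTop, AEStronglyMeasurable (fun s : ℝ =>
      ‖∫ μ : ℝ, Complex.exp (Complex.I * μ * s) *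
        (A0 N ((N : ℝ) * (t + s / (2 * (N : ℝ)))) μ *
            (starRingEnd ℂ) (A0 N ((N : ℝ) * (t - s / (2 * (N : ℝ)))) μ) -
          A t μ * (starRingEnd ℂ) (A t μ))‖ ^ 2) (volume : Measure ℝ) :=
    Filter.Eventually.of_forall fun N => meas_F t A0 A hmeasN hmeasA N
  have hbound : ∀ᶠ N : ℕ in atTop, ∀ᵐ s : ℝ ∂(volume : Measure ℝ),
      ‖(‖∫ μ : ℝ, Complex.exp (Complex.I * μ * s) *
        (A0 N ((N : ℝ) * (t + s / (2 * (N : ℝ)))) μ *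
            (starRingEnd ℂ) (A0 N ((N : ℝ) * (t - s / (2 * (N : ℝ)))) μ) -
          A t μ * (starRingEnd ℂ) (A t μ))‖ ^ 2)‖ ≤ 20 * K ^ 4 * (1 / (1 + s ^ 2)) := by
    filter_upwards [eventually_ge_atTop 1] with N hN
    refine ae_of_all _ fun s => ?_
    rw [Real.norm_eq_abs, _root_.abs_of_nonneg (by positivity)]
    exact pair_bound hK0
      (hL2N ((N : ℝ) * (t + s / (2 * (N : ℝ)))) N hN).1
      (hL2N ((N : ℝ) * (t - s / (2 * (N : ℝ)))) N hN).1
      hL2A.1 hL2A.1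
      (hL2N ((N : ℝ) * (t + s / (2 * (N : ℝ)))) N hN).2
      (hL2N ((N : ℝ) * (t - s / (2 * (N : ℝ)))) N hN).2
      hL2A.2 hL2A.2
      (hdiffN ((N : ℝ) * (t + s / (2 * (N : ℝ)))) N hN)
      (hdiffN ((N : ℝ) * (t - s / (2 * (N : ℝ)))) N hN)
      hdiffA hdiffA
      (hderivL2N ((N : ℝ) * (t + s / (2 * (N : ℝ)))) N hN).1
      (hderivL2N ((N : ℝ) * (t - s / (2 * (N : ℝ)))) N hN).1
      hderivL2A.1 hderivL2A.1
      (hderivL2N ((N : ℝ) * (t + s / (2 * (N : ℝ)))) N hN).2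
      (hderivL2N ((N : ℝ) * (t - s / (2 * (N : ℝ)))) N hN).2
      hderivL2A.2 hderivL2A.2 s
  have hlim : ∀ᵐ s : ℝ ∂(volume : Measure ℝ), Tendsto (fun N : ℕ =>
      ‖∫ μ : ℝ, Complex.exp (Complex.I * μ * s) *
        (A0 N ((N : ℝ) * (t + s / (2 * (N : ℝ)))) μ *
            (starRingEnd ℂ) (A0 N ((N : ℝ) * (t - s / (2 * (N : ℝ)))) μ) -
          A t μ * (starRingEnd ℂ) (A t μ))‖ ^ 2) atTop (nhds ((fun _ : ℝ => (0:ℝ)) s)) := by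
    refine ae_of_all _ fun s => ?_
    set εp : ℕ → ℝ := fun N =>
      Real.sqrt (∫ μ : ℝ, ‖A0 N ((N : ℝ) * (t + s / (2 * (N : ℝ)))) μ - A t μ‖ ^ 2) with hεpdef
    set εm : ℕ → ℝ := fun N =>
      Real.sqrt (∫ μ : ℝ, ‖A0 N ((N : ℝ) * (t - s / (2 * (N : ℝ)))) μ - A t μ‖ ^ 2) with hεmdef
    have hεp : Tendsto εp atTop (nhds 0) := by
      have := (Real.continuous_sqrt.tendsto 0).comp (hconv_plus s)
      rw [Real.sqrt_zero] at this; exact this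
    have hεm : Tendsto εm atTop (nhds 0) := by
      have := (Real.continuous_sqrt.tendsto 0).comp (hconv_minus s)
      rw [Real.sqrt_zero] at this; exact this
    have hG : Tendsto (fun N : ℕ => (εp N * K + K * εm N) ^ 2) atTop (nhds 0) := by
      have h1 : Tendsto (fun N : ℕ => εp N * K + K * εm N) atTop (nhds (0 * K + K * 0)) :=
        (hεp.mul_const K).add (hεm.const_mul K)
      have h2 := h1.pow 2
      norm_num at h2
      exact h2
    refine squeeze_zero' (Filter.Eventually.of_forall fun N => by positivity) ?_ hG
    filter_upwards [eventually_ge_atTop 1] with N hN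
    set aN : ℝ → ℂ := A0 N ((N : ℝ) * (t + s / (2 * (N : ℝ)))) with haNdef
    set bN : ℝ → ℂ := A0 N ((N : ℝ) * (t - s / (2 * (N : ℝ)))) with hbNdef
    set a : ℝ → ℂ := A t with hadef
    have haN : MemLp aN 2 (volume : Measure ℝ) :=
      (hL2N ((N : ℝ) * (t + s / (2 * (N : ℝ)))) N hN).1
    have hbN : MemLp bN 2 (volume : Measure ℝ) :=
      (hL2N ((N : ℝ) * (t - s / (2 * (N : ℝ)))) N hN).1
    have hbNb : eLpNorm bN 2 (volume : Measure ℝ) ≤ ENNReal.ofReal K :=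
      (hL2N ((N : ℝ) * (t - s / (2 * (N : ℝ)))) N hN).2
    have ha : MemLp a 2 (volume : Measure ℝ) := hL2A.1
    have hab : eLpNorm a 2 (volume : Measure ℝ) ≤ ENNReal.ofReal K := hL2A.2
    have hdp : MemLp (fun μ : ℝ => aN μ - a μ) 2 (volume : Measure ℝ) := haN.sub ha
    have hdm : MemLp (fun μ : ℝ => bN μ - a μ) 2 (volume : Measure ℝ) := hbN.sub ha
    have ep_eq : eLpNorm (fun μ : ℝ => aN μ - a μ) 2 (volume : Measure ℝ)
        = ENNReal.ofReal (εp N) := eLpNorm_two_eq hdp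
    have em_eq : eLpNorm (fun μ : ℝ => bN μ - a μ) 2 (volume : Measure ℝ)
        = ENNReal.ofReal (εm N) := eLpNorm_two_eq hdm
    have X1 : ∫ μ : ℝ, ‖(aN μ - a μ) * (starRingEnd ℂ) (bN μ)‖ ≤ εp N * K :=
      integral_norm_mul_le hdp (memL2_conj hbN) (Real.sqrt_nonneg _) hK0 (le_of_eq ep_eq)
        (by rw [eLpNorm_conj']; exact hbNb)
    have X2 : ∫ μ : ℝ, ‖a μ * (starRingEnd ℂ) (bN μ - a μ)‖ ≤ K * εm N :=
      integral_norm_mul_le ha (memL2_conj hdm) hK0 (Real.sqrt_nonneg _) hab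
        (by rw [eLpNorm_conj']; exact le_of_eq em_eq)
    have hXint : Integrable (fun μ : ℝ => (aN μ - a μ) * (starRingEnd ℂ) (bN μ))
        (volume : Measure ℝ) := integrable_mul_L2 hdp (memL2_conj hbN)
    have hYint : Integrable (fun μ : ℝ => a μ * (starRingEnd ℂ) (bN μ - a μ))
        (volume : Measure ℝ) := integrable_mul_L2 ha (memL2_conj hdm)
    have hhint : Integrable (fun μ : ℝ => aN μ * (starRingEnd ℂ) (bN μ) -
        a μ * (starRingEnd ℂ) (a μ)) (volume : Measure ℝ) :=
      (integrable_mul_L2 haN (memL2_conj hbN)).sub (integrable_mul_L2 ha (memL2_conj ha))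
    have hIdent : ∀ μ : ℝ, aN μ * (starRingEnd ℂ) (bN μ) - a μ * (starRingEnd ℂ) (a μ)
        = (aN μ - a μ) * (starRingEnd ℂ) (bN μ) + a μ * (starRingEnd ℂ) (bN μ - a μ) :=
      fun μ => by rw [map_sub]; ring
    have kX : Integrable (fun μ : ℝ => ‖(aN μ - a μ) * (starRingEnd ℂ) (bN μ)‖)
        (volume : Measure ℝ) := hXint.norm
    have kY : Integrable (fun μ : ℝ => ‖a μ * (starRingEnd ℂ) (bN μ - a μ)‖)
        (volume : Measure ℝ) := hYint.norm
    have step : ∫ μ : ℝ, ‖aN μ * (starRingEnd ℂ) (bN μ) - a μ * (starRingEnd ℂ) (a μ)‖ ≤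
        ∫ μ : ℝ, (‖(aN μ - a μ) * (starRingEnd ℂ) (bN μ)‖ +
          ‖a μ * (starRingEnd ℂ) (bN μ - a μ)‖) :=
      integral_mono hhint.norm (kX.add kY)
        (fun μ => by rw [hIdent μ]; exact norm_add_le _ _)
    rw [integral_add kX kY] at step
    have hJ1 : ‖∫ μ : ℝ, Complex.exp (Complex.I * μ * s) *
        (aN μ * (starRingEnd ℂ) (bN μ) - a μ * (starRingEnd ℂ) (a μ))‖ ≤
        ∫ μ : ℝ, ‖aN μ * (starRingEnd ℂ) (bN μ) - a μ * (starRingEnd ℂ) (a μ)‖ :=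
      norm_J_le _ s
    have hbJ : ‖∫ μ : ℝ, Complex.exp (Complex.I * μ * s) *
        (aN μ * (starRingEnd ℂ) (bN μ) - a μ * (starRingEnd ℂ) (a μ))‖ ≤
        εp N * K + K * εm N := by linarith [hJ1, step, X1, X2]
    have hnn : (0:ℝ) ≤ ‖∫ μ : ℝ, Complex.exp (Complex.I * μ * s) *
        (aN μ * (starRingEnd ℂ) (bN μ) - a μ * (starRingEnd ℂ) (a μ))‖ := norm_nonneg _
    nlinarith [hbJ, hnn, Real.sqrt_nonneg (∫ μ : ℝ, ‖aN μ - a μ‖ ^ 2),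
      Real.sqrt_nonneg (∫ μ : ℝ, ‖bN μ - a μ‖ ^ 2)]
  have main := tendsto_integral_filter_of_dominated_convergence
    (μ := (volume : Measure ℝ)) (f := fun _ : ℝ => (0:ℝ))
    (bound := fun s : ℝ => 20 * K ^ 4 * (1 / (1 + s ^ 2)))
    hmeas hbound bound_int hlim
  simpa using main
end

section
/- Let a : ℝ → ℝ be continuous, and suppose that for every T ∈ ℝ there exists ε_T > 0 such that a(s) ≥ ε_T for all s ≤ T. For N ∈ ℕ and t ∈ ℝ define g_N(t, u) = 1_{{u ≥ 0}} · exp( − ∫_{−u}^{0} a(s/N + t) ds ) and g(t, u) = 1_{{u ≥ 0}} · exp( − a(t) · u ). Then: (1) for every t ∈ ℝ, ∫_0^∞ | g_N(t, u) − g(t, u) |² du → 0 as N → ∞; and (2) the map t ↦ g(t, ·) from ℝ to L²(ℝ) is continuous. -/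
open MeasureTheory Filter intervalIntegral
open scoped ENNReal NNReal

lemma tv_sq_le_four_mul_exp (x : ℝ) (hx : 0 ≤ x) : x ^ 2 ≤ 4 * Real.exp x := by
  have h := Real.add_one_le_exp (x / 2)
  have h2 : Real.exp (x / 2) * Real.exp (x / 2) = Real.exp x := by
    rw [← Real.exp_add]; ring_nf
  nlinarith

lemma tv_exp_sub_exp_le (ε u b c : ℝ) (hu : 0 ≤ u) (hb : ε ≤ b) (hc : ε ≤ c) :
    |Real.exp (-(b * u)) - Real.exp (-(c * u))|
      ≤ (u * Real.exp (-(ε * u))) * |b - c| := by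
  have key := Convex.norm_image_sub_le_of_norm_hasDerivWithin_le
    (f := fun x : ℝ => Real.exp (-(x * u)))
    (f' := fun x : ℝ => Real.exp (-(x * u)) * -u) (s := Set.Ici ε)
    (C := u * Real.exp (-(ε * u))) ?_ ?_ (convex_Ici ε) hc hb
  · simpa [Real.norm_eq_abs] using key
  · intro x _
    have h1 : HasDerivAt (fun x : ℝ => -(x * u)) (-u) x := by
      exact (hasDerivAt_mul_const (c := u) (x := x)).neg
    exact h1.exp.hasDerivWithinAt
  · intro x hx
    have h1 : Real.exp (-(x * u)) ≤ Real.exp (-(ε * u)) := by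
      apply Real.exp_le_exp.2
      have : ε * u ≤ x * u := mul_le_mul_of_nonneg_right hx hu
      linarith
    rw [norm_mul, norm_neg, Real.norm_eq_abs, Real.norm_eq_abs,
      abs_of_pos (Real.exp_pos _), abs_of_nonneg hu]
    rw [mul_comm]
    exact mul_le_mul_of_nonneg_left h1 hu

lemma tv_exponent_tendsto (a : ℝ → ℝ) (ha : Continuous a) (t u : ℝ) (hu : 0 ≤ u) :
    Tendsto (fun N : ℕ => ∫ s in (-u)..(0 : ℝ), a (s / N + t)) atTop
      (nhds (a t * u)) := by
  rw [Metric.tendsto_atTop]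
  intro δ hδ
  have hδ' : 0 < δ / (u + 1) := by positivity
  obtain ⟨η, hη, hηa⟩ := Metric.continuousAt_iff.1 (ha.continuousAt (x := t)) _ hδ'
  obtain ⟨M, hM⟩ := exists_nat_gt (u / η)
  refine ⟨max M 1, fun N hN => ?_⟩
  have hN1 : (1 : ℕ) ≤ N := le_trans (le_max_right M 1) hN
  have hNpos : (0 : ℝ) < N := by exact_mod_cast hN1
  have hMN : (M : ℝ) ≤ N := by exact_mod_cast le_trans (le_max_left M 1) hN
  have huN : u / N < η := by
    rw [div_lt_iff₀ hNpos]
    have : u / η < N := lt_of_lt_of_le hM hMN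
    rw [div_lt_iff₀ hη] at this
    linarith
  have hint : IntervalIntegrable (fun s => a (s / N + t)) volume (-u) 0 :=
    (ha.comp (by continuity)).intervalIntegrable _ _
  have hsub : (∫ s in (-u)..(0 : ℝ), a (s / N + t)) - a t * u
      = ∫ s in (-u)..(0 : ℝ), (a (s / N + t) - a t) := by
    rw [intervalIntegral.integral_sub hint (intervalIntegrable_const)]
    rw [intervalIntegral.integral_const]
    simp [smul_eq_mul]; ring
  rw [Real.dist_eq, hsub]
  have hbd : ∀ s ∈ Set.uIoc (-u) (0 : ℝ), ‖a (s / N + t) - a t‖ ≤ δ / (u + 1) := by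
    intro s hs
    rw [Set.uIoc_of_le (by linarith : -u ≤ (0:ℝ))] at hs
    have hs1 : -u < s := hs.1
    have hs2 : s ≤ 0 := hs.2
    have habs : |s / N| < η := by
      rw [abs_div, abs_of_pos hNpos]
      calc |s| / (N : ℝ) ≤ u / N := by
            gcongr
            rw [abs_le]; constructor <;> linarith
        _ < η := huN
      -- note: div_le_div_of_nonneg_right might have different arg order
    have := hηa (x := s / N + t) (by rw [Real.dist_eq]; simpa using habs)
    rw [Real.dist_eq] at this
    exact le_of_lt this
  have := intervalIntegral.norm_integral_le_of_norm_le_const hbd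
  rw [Real.norm_eq_abs] at this
  have habs0 : |(0:ℝ) - (-u)| = u := by rw [abs_of_nonneg] <;> linarith
  rw [habs0] at this
  calc |∫ s in (-u)..(0:ℝ), (a (s / N + t) - a t)| ≤ δ / (u + 1) * u := this
    _ < δ := by rw [div_mul_eq_mul_div, div_lt_iff₀ (by linarith)]; nlinarith
/-- Proposition 4.1: local stationarity of time-varying CAR(1) kernels. If `a` is continuous
and bounded below by a positive constant on every left half-line, then the kernels
`g_N(t,u) = 1_{u ≥ 0} exp(−∫_{−u}^0 a(s/N + t) ds)` converge in `L²` to the limiting kernel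
`g(t,u) = 1_{u ≥ 0} e^{−a(t)u}`, and `t ↦ g(t,·)` is `L²`-continuous. -/
theorem tvCAR1_locally_stationary
    (a : ℝ → ℝ) (ha : Continuous a)
    (hpos : ∀ T : ℝ, ∃ ε > (0 : ℝ), ∀ s ≤ T, ε ≤ a s)
    (gN : ℕ → ℝ → ℝ → ℝ) (g : ℝ → ℝ → ℝ)
    (hgN : ∀ (N : ℕ) (t u : ℝ),
      gN N t u = if 0 ≤ u then Real.exp (-∫ s in (-u)..(0 : ℝ), a (s / N + t)) else 0)
    (hg : ∀ t u : ℝ, g t u = if 0 ≤ u then Real.exp (-(a t * u)) else 0) :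
    (∀ t : ℝ, Tendsto (fun N : ℕ => ∫ u in Set.Ioi (0 : ℝ), (gN N t u - g t u) ^ 2)
        atTop (nhds 0)) ∧
      ∀ t : ℝ, Tendsto (fun t' => eLpNorm (fun u => g t' u - g t u) 2 (volume : Measure ℝ))
        (nhds t) (nhds 0) := by
  constructor
  · -- Part 1
    intro t
    obtain ⟨ε, hε, hεa⟩ := hpos t
    -- measurability helpers
    have hcontI : ∀ N : ℕ, Continuous fun u : ℝ => ∫ s in (-u)..(0 : ℝ), a (s / N + t) := by
      intro N
      have h1 : Continuous fun x : ℝ => ∫ s in (0 : ℝ)..x, a (s / N + t) :=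
        intervalIntegral.continuous_primitive
          (fun p q => (ha.comp (by continuity)).intervalIntegrable p q) 0
      have h2 : (fun u : ℝ => ∫ s in (-u)..(0 : ℝ), a (s / N + t))
          = fun u : ℝ => -∫ s in (0 : ℝ)..(-u), a (s / N + t) := by
        funext u; exact intervalIntegral.integral_symm 0 (-u)
      rw [h2]
      exact (h1.comp continuous_neg).neg
    have hmeasN : ∀ N : ℕ, Measurable (gN N t) := by
      intro N
      have : gN N t = fun u => if 0 ≤ u then
          Real.exp (-∫ s in (-u)..(0 : ℝ), a (s / N + t)) else 0 := funext (hgN N t)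
      rw [this]
      exact Measurable.ite (measurableSet_le measurable_const measurable_id)
        ((hcontI N).neg.rexp.measurable) measurable_const
    have hmeasg : Measurable (g t) := by
      have : g t = fun u => if 0 ≤ u then Real.exp (-(a t * u)) else 0 := funext (hg t)
      rw [this]
      exact Measurable.ite (measurableSet_le measurable_const measurable_id)
        ((continuous_const.mul continuous_id).neg.rexp.measurable) measurable_const
    -- lower bound on exponents
    have hIlow : ∀ (N : ℕ) (u : ℝ), 0 ≤ u →
        ε * u ≤ ∫ s in (-u)..(0 : ℝ), a (s / N + t) := by
      intro N u hu
      have hint : IntervalIntegrable (fun s => a (s / N + t)) volume (-u) 0 :=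
        (ha.comp (by continuity)).intervalIntegrable _ _
      have hmono := intervalIntegral.integral_mono_on (μ := volume)
        (f := fun _ : ℝ => ε) (g := fun s => a (s / N + t))
        (by linarith : -u ≤ (0:ℝ)) intervalIntegrable_const hint ?_
      · calc ε * u = ∫ _ in (-u)..(0:ℝ), ε := by
              rw [intervalIntegral.integral_const]; simp [smul_eq_mul]; ring
          _ ≤ _ := hmono
      · intro s hs
        apply hεa
        have h0 : s / (N : ℝ) ≤ 0 :=
          div_nonpos_iff.2 (Or.inr ⟨hs.2, Nat.cast_nonneg N⟩)
        linarith
    have hgNle : ∀ (N : ℕ) (u : ℝ), 0 ≤ u → gN N t u ≤ Real.exp (-(ε * u)) := by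
      intro N u hu
      rw [hgN N t u, if_pos hu]
      exact Real.exp_le_exp.2 (by linarith [hIlow N u hu])
    have hgle : ∀ u : ℝ, 0 ≤ u → g t u ≤ Real.exp (-(ε * u)) := by
      intro u hu
      rw [hg t u, if_pos hu]
      apply Real.exp_le_exp.2
      have : ε * u ≤ a t * u := mul_le_mul_of_nonneg_right (hεa t le_rfl) hu
      linarith
    have hmain := MeasureTheory.tendsto_integral_of_dominated_convergence
      (μ := volume.restrict (Set.Ioi (0 : ℝ)))
      (F := fun (N : ℕ) (u : ℝ) => (gN N t u - g t u) ^ 2) (f := fun _ : ℝ => (0 : ℝ))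
      (bound := fun u : ℝ => Real.exp (-(2 * ε) * u)) ?_ ?_ ?_ ?_
    · simpa using hmain
    · intro N
      exact (((hmeasN N).sub hmeasg).pow_const 2).aestronglyMeasurable
    · exact exp_neg_integrableOn_Ioi 0 (by linarith)
    · intro N
      rw [ae_restrict_iff' measurableSet_Ioi]
      filter_upwards with u hu
      have hu' : 0 ≤ u := le_of_lt hu
      have h1 := hgNle N u hu'
      have h2 := hgle u hu'
      have h3 : 0 < gN N t u := by rw [hgN N t u, if_pos hu']; exact Real.exp_pos _
      have h4 : 0 < g t u := by rw [hg t u, if_pos hu']; exact Real.exp_pos _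
      have habs : |gN N t u - g t u| ≤ Real.exp (-(ε * u)) := by
        rw [abs_le]; constructor <;> linarith
      have hEsq : Real.exp (-(ε * u)) ^ 2 = Real.exp (-(2 * ε) * u) := by
        rw [sq, ← Real.exp_add]; ring_nf
      calc ‖(gN N t u - g t u) ^ 2‖ = |gN N t u - g t u| ^ 2 := by
            rw [Real.norm_eq_abs, abs_pow, sq_abs, ← sq_abs]
        _ ≤ Real.exp (-(ε * u)) ^ 2 := by
            exact pow_le_pow_left₀ (abs_nonneg _) habs 2
        _ = Real.exp (-(2 * ε) * u) := hEsq
    · rw [ae_restrict_iff' measurableSet_Ioi]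
      filter_upwards with u hu
      have hu' : (0:ℝ) ≤ u := le_of_lt hu
      have hI := tv_exponent_tendsto a ha t u hu'
      have hN : Tendsto (fun N : ℕ => gN N t u) atTop (nhds (g t u)) := by
        have : Tendsto (fun N : ℕ =>
            Real.exp (-∫ s in (-u)..(0:ℝ), a (s / N + t))) atTop
            (nhds (Real.exp (-(a t * u)))) :=
          (Real.continuous_exp.tendsto _).comp hI.neg
        simp only [hgN, hg, if_pos hu']
        exact this
      have := (hN.sub (tendsto_const_nhds (x := g t u))).pow 2
      simpa using this
  · -- Part 2
    intro t
    obtain ⟨ε, hε, hεa⟩ := hpos (t + 1)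
    set φ : ℝ → ℝ := fun u => if 0 ≤ u then u * Real.exp (-ε * u) else 0 with hφdef
    have hφm : Measurable φ := by
      exact Measurable.ite (measurableSet_le measurable_const measurable_id)
        (measurable_id.mul ((continuous_const.mul continuous_id).rexp.measurable))
        measurable_const
    have hφ2 : Integrable (fun u => φ u ^ 2) volume := by
      have heq : (fun u => φ u ^ 2) = Set.indicator (Set.Ici (0:ℝ))
          (fun u => (u * Real.exp (-ε * u)) ^ 2) := by
        funext u
        by_cases h : 0 ≤ u <;>
          simp [hφdef, Set.indicator, Set.mem_Ici, h]
      rw [heq, integrable_indicator_iff measurableSet_Ici,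
        integrableOn_Ici_iff_integrableOn_Ioi]
      apply Integrable.mono ((exp_neg_integrableOn_Ioi 0 hε).const_mul (4 / ε ^ 2))
      · exact ((continuous_id.mul (continuous_const.mul continuous_id).rexp).pow 2).aestronglyMeasurable.restrict
      · rw [ae_restrict_iff' measurableSet_Ioi]
        filter_upwards with u hu
        have hu' : (0:ℝ) ≤ u := le_of_lt hu
        have h1 := tv_sq_le_four_mul_exp (ε * u) (by positivity)
        have h4 : Real.exp (ε * u) * Real.exp (-ε * u) = 1 := by
          rw [← Real.exp_add]; ring_nf; exact Real.exp_zero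
        have hE : (0:ℝ) < Real.exp (-ε * u) := Real.exp_pos _
        rw [Real.norm_eq_abs, Real.norm_eq_abs, abs_of_nonneg (sq_nonneg _),
          abs_of_nonneg (by positivity : (0:ℝ) ≤ 4 / ε ^ 2 * Real.exp (-ε * u))]
        rw [div_mul_eq_mul_div, le_div_iff₀ (by positivity : (0:ℝ) < ε ^ 2)]
        have h3 : (ε * u) ^ 2 * Real.exp (-ε * u) ^ 2
            ≤ 4 * Real.exp (ε * u) * Real.exp (-ε * u) ^ 2 := by
          nlinarith [sq_nonneg (Real.exp (-ε * u))]
        nlinarith [h3, h4, hE]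
    have hmem : MemLp φ 2 volume :=
      (memLp_two_iff_integrable_sq hφm.aestronglyMeasurable).2 hφ2
    have hK : eLpNorm φ 2 volume ≠ ⊤ := hmem.eLpNorm_ne_top
    have h0 : Tendsto (fun t' => a t' - a t) (nhds t) (nhds 0) := by
      simpa using (ha.tendsto t).sub (tendsto_const_nhds (x := a t))
    have h1 : Tendsto (fun t' => ((‖a t' - a t‖₊ : ℝ≥0) : ℝ≥0∞)) (nhds t) (nhds 0) := by
      rw [← ENNReal.coe_zero]
      apply ENNReal.tendsto_coe.2
      have : Tendsto (fun t' => ‖a t' - a t‖₊) (nhds t) (nhds ‖(0:ℝ)‖₊) :=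
        (continuous_nnnorm.tendsto (0 : ℝ)).comp h0
      simpa using this
    have hupper : Tendsto (fun t' => ((‖a t' - a t‖₊ : ℝ≥0) : ℝ≥0∞) * eLpNorm φ 2 volume)
        (nhds t) (nhds 0) := by
      have := ENNReal.Tendsto.mul_const h1 (Or.inr hK)
      simpa using this
    apply tendsto_of_tendsto_of_tendsto_of_le_of_le' tendsto_const_nhds hupper
    · exact Eventually.of_forall fun _ => zero_le
    · filter_upwards [Metric.ball_mem_nhds t one_pos] with t' ht'
      rw [Metric.mem_ball, Real.dist_eq] at ht'
      have ht'' := abs_lt.1 ht'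
      have hb : ε ≤ a t' := hεa t' (by linarith [ht''.2])
      have hc : ε ≤ a t := hεa t (by linarith)
      have hptw : ∀ u : ℝ, ‖g t' u - g t u‖ ≤ ‖(a t' - a t) * φ u‖ := by
        intro u
        rw [hg, hg, norm_mul, Real.norm_eq_abs, Real.norm_eq_abs]
        by_cases hu : 0 ≤ u
        · rw [if_pos hu, if_pos hu]
          have := tv_exp_sub_exp_le ε u (a t') (a t) hu hb hc
          have hφu : φ u = u * Real.exp (-ε * u) := by rw [hφdef]; simp [hu]
          rw [hφu, Real.norm_eq_abs, abs_of_nonneg (by positivity : (0:ℝ) ≤ u * Real.exp (-ε * u))]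
          calc |Real.exp (-(a t' * u)) - Real.exp (-(a t * u))|
              ≤ u * Real.exp (-(ε * u)) * |a t' - a t| := this
            _ = |a t' - a t| * (u * Real.exp (-ε * u)) := by rw [neg_mul]; ring
        · rw [if_neg hu, if_neg hu]
          have hφu : φ u = 0 := by rw [hφdef]; simp [hu]
          simp [hφu]
      calc eLpNorm (fun u => g t' u - g t u) 2 volume
          ≤ eLpNorm (fun u => (a t' - a t) * φ u) 2 volume := eLpNorm_mono hptw
        _ = ((‖a t' - a t‖₊ : ℝ≥0) : ℝ≥0∞) * eLpNorm φ 2 volume := by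
            rw [show (fun u => (a t' - a t) * φ u) = (a t' - a t) • φ from rfl,
              eLpNorm_const_smul, enorm_eq_nnnorm]
end

section
/- Let p ≥ 1 and let A : ℝ → M_{p×p}(ℝ), B : ℝ → ℝ^p, C : ℝ → ℝ^p be continuous with sup_{s∈ℝ} ‖C(s)‖ < ∞. Fix t ∈ ℝ. For each N ∈ ℕ and each u ≤ 0, let Ψ_{N,t}(0, u) ∈ M_{p×p}(ℝ) denote the value at time 0 of the unique solution s ↦ Ψ(s) on [u, 0] of the linear matrix ODE Ψ(u) = I_p, dΨ/ds (s) = A(s/N + t) · Ψ(s). Assume there exists a function F_t ∈ L²((−∞, 0]) such that ‖Ψ_{N,t}(0, u)‖ ≤ F_t(u) for all N ∈ ℕ and all u ≤ 0. Then ∫_0^∞ | B(t)ᵀ · Ψ_{N,t}(0, −v) · C(−v/N + t) − B(t)ᵀ · exp(v · A(t)) · C(t) |² dv → 0 as N → ∞, where exp denotes the matrix exponential. -/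
open Matrix Filter MeasureTheory NormedSpace

set_option maxHeartbeats 2000000
set_option synthInstance.maxHeartbeats 400000

section Aux

variable {p : ℕ}

noncomputable def TmL (p : ℕ) : Matrix (Fin p) (Fin p) ℝ →ₗ[ℝ]
    (EuclideanSpace ℝ (Fin p) →L[ℝ] EuclideanSpace ℝ (Fin p)) where
  toFun := fun M => Matrix.toEuclideanCLM (𝕜 := ℝ) M
  map_add' := fun x y => map_add _ x y
  map_smul' := fun r x => map_smul _ r x

noncomputable def TmLinv (p : ℕ) :
    (EuclideanSpace ℝ (Fin p) →L[ℝ] EuclideanSpace ℝ (Fin p)) →ₗ[ℝ]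
      Matrix (Fin p) (Fin p) ℝ where
  toFun := fun f => (Matrix.toEuclideanCLM (𝕜 := ℝ)).symm f
  map_add' := fun x y => map_add _ x y
  map_smul' := fun r x => map_smul _ r x

lemma TmL_cont : Continuous (TmL p) := LinearMap.continuous_of_finiteDimensional _

lemma TmLinv_cont : Continuous (TmLinv p) := LinearMap.continuous_of_finiteDimensional _

/-- `toEuclideanCLM` as a continuous linear equivalence. -/
noncomputable def TmE (p : ℕ) : Matrix (Fin p) (Fin p) ℝ ≃L[ℝ]
    (EuclideanSpace ℝ (Fin p) →L[ℝ] EuclideanSpace ℝ (Fin p)) :=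
  { TmL p with
    invFun := TmLinv p
    left_inv := fun M => StarAlgEquiv.symm_apply_apply (Matrix.toEuclideanCLM (𝕜 := ℝ)) M
    right_inv := fun f => StarAlgEquiv.apply_symm_apply (Matrix.toEuclideanCLM (𝕜 := ℝ)) f
    continuous_toFun := TmL_cont
    continuous_invFun := TmLinv_cont }

lemma TmE_apply (M : Matrix (Fin p) (Fin p) ℝ) :
    TmE p M = Matrix.toEuclideanCLM (𝕜 := ℝ) M := by rfl

lemma T_continuous (p : ℕ) :
    Continuous (fun M : Matrix (Fin p) (Fin p) ℝ => Matrix.toEuclideanCLM (𝕜 := ℝ) M) := by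
  have h := (TmE p).continuous
  have e : (fun M : Matrix (Fin p) (Fin p) ℝ => Matrix.toEuclideanCLM (𝕜 := ℝ) M)
      = ⇑(TmE p) := funext fun M => (TmE_apply M).symm
  rw [e]; exact h

lemma T_exp (M : Matrix (Fin p) (Fin p) ℝ) :
    Matrix.toEuclideanCLM (𝕜 := ℝ) (exp M)
      = exp (Matrix.toEuclideanCLM (𝕜 := ℝ) M) := by
  have h1 : (∑' n : ℕ, (TmE p) (((n.factorial : ℝ))⁻¹ • M ^ n))
      = (TmE p) (∑' n : ℕ, ((n.factorial : ℝ))⁻¹ • M ^ n) :=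
    (TmE p).tsum_eq_iff.mpr (by rw [ContinuousLinearEquiv.symm_apply_apply])
  have key : (TmE p) (∑' n : ℕ, ((n.factorial : ℝ))⁻¹ • M ^ n)
      = ∑' n : ℕ, ((n.factorial : ℝ))⁻¹ • (Matrix.toEuclideanCLM (𝕜 := ℝ) M) ^ n := by
    rw [← h1]
    exact tsum_congr fun n => by rw [TmE_apply, _root_.map_smul, map_pow]
  rw [exp_eq_tsum ℝ, exp_eq_tsum ℝ]
  exact key

lemma T_hasDerivAt {Ψ : ℝ → Matrix (Fin p) (Fin p) ℝ} {D : Matrix (Fin p) (Fin p) ℝ} {s : ℝ}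
    (h : ∀ i j, HasDerivAt (fun r => Ψ r i j) (D i j) s) :
    HasDerivAt (fun r => Matrix.toEuclideanCLM (𝕜 := ℝ) (Ψ r))
      (Matrix.toEuclideanCLM (𝕜 := ℝ) D) s := by
  have key : ∀ M : Matrix (Fin p) (Fin p) ℝ,
      Matrix.toEuclideanCLM (𝕜 := ℝ) M
        = ∑ i : Fin p, ∑ j : Fin p,
            M i j • Matrix.toEuclideanCLM (𝕜 := ℝ) (Matrix.single i j 1) := by
    intro M
    conv_lhs => rw [Matrix.matrix_eq_sum_single M]
    rw [map_sum]
    refine Finset.sum_congr rfl fun i _ => ?_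
    rw [map_sum]
    refine Finset.sum_congr rfl fun j _ => ?_
    have e : Matrix.single i j (M i j) = M i j • Matrix.single i j (1 : ℝ) := by
      rw [Matrix.smul_single, smul_eq_mul, mul_one]
    rw [e, _root_.map_smul]
  have h1 : HasDerivAt
      (fun r => ∑ i : Fin p, ∑ j : Fin p,
        Ψ r i j • Matrix.toEuclideanCLM (𝕜 := ℝ) (Matrix.single i j 1))
      (∑ i : Fin p, ∑ j : Fin p,
        D i j • Matrix.toEuclideanCLM (𝕜 := ℝ) (Matrix.single i j 1)) s :=
    HasDerivAt.fun_sum fun i _ => HasDerivAt.fun_sum fun j _ => (h i j).smul_const (Matrix.toEuclideanCLM (𝕜 := ℝ) (Matrix.single i j 1))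
  have e1 : (fun r => Matrix.toEuclideanCLM (𝕜 := ℝ) (Ψ r))
      = (fun r => ∑ i : Fin p, ∑ j : Fin p,
          Ψ r i j • Matrix.toEuclideanCLM (𝕜 := ℝ) (Matrix.single i j 1)) :=
    funext fun r => key (Ψ r)
  rw [key D, e1]
  exact h1

lemma ode_comparison {𝔸 : Type*} [NormedRing 𝔸] [NormedSpace ℝ 𝔸]
    {g₁ g₂ M₁ M₂ : ℝ → 𝔸} {u K ε G δ : ℝ} (hu : u ≤ 0) (hε : 0 ≤ ε)
    (h₁ : ∀ s ∈ Set.Icc u (0:ℝ), HasDerivAt g₁ (M₁ s * g₁ s) s)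
    (h₂ : ∀ s ∈ Set.Icc u (0:ℝ), HasDerivAt g₂ (M₂ s * g₂ s) s)
    (hK : ∀ s ∈ Set.Icc u (0:ℝ), ‖M₁ s‖ ≤ K)
    (hG : ∀ s ∈ Set.Icc u (0:ℝ), ‖g₂ s‖ ≤ G)
    (hMd : ∀ s ∈ Set.Icc u (0:ℝ), ‖M₁ s - M₂ s‖ ≤ ε)
    (hδ : ‖g₁ u - g₂ u‖ ≤ δ) :
    ‖g₁ 0 - g₂ 0‖ ≤ gronwallBound δ K (ε * G) (0 - u) := by
  refine norm_le_gronwallBound_of_norm_deriv_right_le (f := fun s => g₁ s - g₂ s)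
    (f' := fun s => M₁ s * g₁ s - M₂ s * g₂ s) (a := u) (b := 0)
    (fun s hs => ((h₁ s hs).sub (h₂ s hs)).continuousAt.continuousWithinAt)
    (fun s hs => (((h₁ s (Set.Ico_subset_Icc_self hs)).sub
      (h₂ s (Set.Ico_subset_Icc_self hs))).hasDerivWithinAt))
    hδ ?_ 0 ⟨hu, le_refl 0⟩
  intro s hs
  have hs' := Set.Ico_subset_Icc_self hs
  calc ‖M₁ s * g₁ s - M₂ s * g₂ s‖
      = ‖M₁ s * (g₁ s - g₂ s) + (M₁ s - M₂ s) * g₂ s‖ := by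
        rw [mul_sub, sub_mul]; abel_nf
    _ ≤ ‖M₁ s * (g₁ s - g₂ s)‖ + ‖(M₁ s - M₂ s) * g₂ s‖ := norm_add_le _ _
    _ ≤ ‖M₁ s‖ * ‖g₁ s - g₂ s‖ + ‖M₁ s - M₂ s‖ * ‖g₂ s‖ :=
        add_le_add (norm_mul_le _ _) (norm_mul_le _ _)
    _ ≤ K * ‖g₁ s - g₂ s‖ + ε * G :=
        add_le_add (mul_le_mul_of_nonneg_right (hK s hs') (norm_nonneg _))
          (mul_le_mul (hMd s hs') (hG s hs') (norm_nonneg _) hε)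

lemma ode_growth {𝔸 : Type*} [NormedRing 𝔸] [NormedSpace ℝ 𝔸]
    {g M1 : ℝ → 𝔸} {u K : ℝ} (hu : u ≤ 0)
    (h : ∀ s ∈ Set.Icc u (0:ℝ), HasDerivAt g (M1 s * g s) s)
    (hK : ∀ s ∈ Set.Icc u (0:ℝ), ‖M1 s‖ ≤ K)
    (hg : ‖g u‖ ≤ 1) :
    ∀ s ∈ Set.Icc u (0:ℝ), ‖g s‖ ≤ Real.exp (K * (s - u)) := by
  intro s hs
  have := norm_le_gronwallBound_of_norm_deriv_right_le (f := g)
    (f' := fun s => M1 s * g s) (a := u) (b := 0) (δ := 1) (K := K) (ε := 0)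
    (fun s hs => (h s hs).continuousAt.continuousWithinAt)
    (fun s hs => (h s (Set.Ico_subset_Icc_self hs)).hasDerivWithinAt)
    hg
    (fun s hs => by
      have hs' := Set.Ico_subset_Icc_self hs
      calc ‖M1 s * g s‖ ≤ ‖M1 s‖ * ‖g s‖ := norm_mul_le _ _
        _ ≤ K * ‖g s‖ := mul_le_mul_of_nonneg_right (hK s hs') (norm_nonneg _)
        _ ≤ K * ‖g s‖ + 0 := by simp)
    s hs
  rwa [gronwallBound_ε0, one_mul] at this

lemma dot_eq_inner (x y : Fin p → ℝ) (M : Matrix (Fin p) (Fin p) ℝ) :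
    x ⬝ᵥ M.mulVec y = inner (𝕜 := ℝ) ((WithLp.equiv 2 (Fin p → ℝ)).symm x)
      (Matrix.toEuclideanCLM (𝕜 := ℝ) M ((WithLp.equiv 2 (Fin p → ℝ)).symm y)) := by
  rw [WithLp.equiv_symm_apply, Matrix.toEuclideanCLM_toLp]
  simp [PiLp.inner_apply, dotProduct, Matrix.toLin'_apply, PiLp.toLp_apply,
    Matrix.mulVec, RCLike.inner_apply, starRingEnd_apply]
  exact Finset.sum_congr rfl fun _ _ => mul_comm _ _

lemma euclid_norm_le (y : Fin p → ℝ) :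
    ‖(WithLp.equiv 2 (Fin p → ℝ)).symm y‖ ≤ Real.sqrt p * ‖y‖ := by
  rw [EuclideanSpace.norm_eq]
  have h1 : ∀ i : Fin p, ‖((WithLp.equiv 2 (Fin p → ℝ)).symm y) i‖ ^ 2 ≤ ‖y‖ ^ 2 := fun i => by
    show ‖y i‖ ^ 2 ≤ ‖y‖ ^ 2
    exact pow_le_pow_left₀ (norm_nonneg _) (norm_le_pi_norm y i) 2
  calc Real.sqrt (∑ i : Fin p, ‖((WithLp.equiv 2 (Fin p → ℝ)).symm y) i‖ ^ 2)
      ≤ Real.sqrt (∑ _i : Fin p, ‖y‖ ^ 2) :=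
        Real.sqrt_le_sqrt (Finset.sum_le_sum fun i _ => h1 i)
    _ = Real.sqrt ((p : ℝ) * ‖y‖ ^ 2) := by
        rw [Finset.sum_const, Finset.card_univ, Fintype.card_fin, nsmul_eq_mul]
    _ = Real.sqrt p * ‖y‖ := by
        rw [Real.sqrt_mul (by positivity), Real.sqrt_sq (norm_nonneg _)]

lemma shift_mem {N : ℕ} (hN : 1 ≤ N) {w R s t : ℝ} (hwR : w ≤ R) (hs : s ∈ Set.Icc (-w) (0:ℝ)) :
    s / N + t ∈ Set.Icc (t - R) t := by
  have hN' : (1:ℝ) ≤ (N:ℝ) := by exact_mod_cast hN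
  have hN0 : (0:ℝ) < N := by linarith
  have hinv : ((N:ℝ))⁻¹ ≤ 1 := inv_le_one_of_one_le₀ hN'
  have hinv0 : (0:ℝ) ≤ ((N:ℝ))⁻¹ := by positivity
  have hs1 : -w ≤ s := hs.1
  have hs2 : s ≤ 0 := hs.2
  have hdiv : s / N = s * ((N:ℝ))⁻¹ := div_eq_mul_inv s _
  constructor
  · rw [hdiv]
    nlinarith [mul_nonneg (neg_nonneg.2 hs2) (sub_nonneg.2 hinv)]
  · rw [hdiv]
    nlinarith [mul_nonneg (neg_nonneg.2 hs2) hinv0]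

lemma sol_aux {p : ℕ} {A : ℝ → Matrix (Fin p) (Fin p) ℝ} (t : ℝ)
    {P : ℕ → ℝ → Matrix (Fin p) (Fin p) ℝ}
    (hP : ∀ N : ℕ, 1 ≤ N → ∀ u ≤ (0 : ℝ), ∃ Ψ : ℝ → Matrix (Fin p) (Fin p) ℝ,
      Ψ u = 1 ∧
        (∀ s ∈ Set.Icc u (0 : ℝ), ∀ i j : Fin p,
          HasDerivAt (fun r => Ψ r i j) ((A (s / N + t) * Ψ s) i j) s) ∧
        P N u = Ψ 0)
    {N : ℕ} (hN : 1 ≤ N) {w : ℝ} (hw : 0 < w) :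
    ∃ g : ℝ → (EuclideanSpace ℝ (Fin p) →L[ℝ] EuclideanSpace ℝ (Fin p)),
      g (-w) = 1 ∧
      (∀ s ∈ Set.Icc (-w) (0:ℝ),
        HasDerivAt g (Matrix.toEuclideanCLM (𝕜 := ℝ) (A (s / N + t)) * g s) s) ∧
      Matrix.toEuclideanCLM (𝕜 := ℝ) (P N (-w)) = g 0 := by
  obtain ⟨Ψ, h0, hd, hPe⟩ := hP N hN (-w) (by linarith)
  refine ⟨fun s => Matrix.toEuclideanCLM (𝕜 := ℝ) (Ψ s), by show Matrix.toEuclideanCLM (𝕜 := ℝ) (Ψ (-w)) = 1; rw [h0, _root_.map_one], ?_,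
    congrArg _ hPe⟩
  intro s hs
  have h1 := T_hasDerivAt (fun i j => hd s hs i j)
  rwa [_root_.map_mul] at h1


lemma conv_aux {p : ℕ} {A : ℝ → Matrix (Fin p) (Fin p) ℝ} (hA : Continuous A) (t : ℝ)
    {P : ℕ → ℝ → Matrix (Fin p) (Fin p) ℝ}
    (hP : ∀ N : ℕ, 1 ≤ N → ∀ u ≤ (0 : ℝ), ∃ Ψ : ℝ → Matrix (Fin p) (Fin p) ℝ,
      Ψ u = 1 ∧
        (∀ s ∈ Set.Icc u (0 : ℝ), ∀ i j : Fin p,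
          HasDerivAt (fun r => Ψ r i j) ((A (s / N + t) * Ψ s) i j) s) ∧
        P N u = Ψ 0)
    {v : ℝ} (hv : 0 < v) :
    Tendsto (fun N : ℕ => Matrix.toEuclideanCLM (𝕜 := ℝ) (P N (-v))) atTop
      (nhds (Matrix.toEuclideanCLM (𝕜 := ℝ) (exp (v • A t)))) := by
  obtain ⟨r₀, hr₀mem, hr₀⟩ := isCompact_Icc.exists_isMaxOn (s := Set.Icc (t - v) t)
    ⟨t, by constructor <;> linarith⟩ (((T_continuous p).comp hA).norm.continuousOn)
  set K := ‖Matrix.toEuclideanCLM (𝕜 := ℝ) (A r₀)‖ with hKdef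
  have hK0 : 0 ≤ K := norm_nonneg _
  have hK : ∀ r ∈ Set.Icc (t - v) t, ‖Matrix.toEuclideanCLM (𝕜 := ℝ) (A r)‖ ≤ K :=
    fun r hr => hr₀ hr
  have h𝔄K : ‖Matrix.toEuclideanCLM (𝕜 := ℝ) (A t)‖ ≤ K := hK t ⟨by linarith, le_refl t⟩
  set G := Real.exp (K * v) with hGdef
  set Φ : ℝ → (EuclideanSpace ℝ (Fin p) →L[ℝ] EuclideanSpace ℝ (Fin p)) :=
    fun s => exp ((s + v) • Matrix.toEuclideanCLM (𝕜 := ℝ) (A t)) with hΦdef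
  have hΦd : ∀ s ∈ Set.Icc (-v) (0:ℝ),
      HasDerivAt Φ (Matrix.toEuclideanCLM (𝕜 := ℝ) (A t) * Φ s) s := by
    intro s _
    have h1 := hasDerivAt_exp_smul_const' (𝕂 := ℝ) (Matrix.toEuclideanCLM (𝕜 := ℝ) (A t)) (s + v)
    have h2 := HasDerivAt.scomp (x := s) h1 ((hasDerivAt_id s).add_const v)
    simpa [hΦdef, Function.comp_def] using h2
  have hΦuv : Φ (-v) = 1 := by
    rw [hΦdef]
    dsimp only
    rw [neg_add_cancel]
    have e0 : ((0:ℝ) • Matrix.toEuclideanCLM (𝕜 := ℝ) (A t))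
        = (0 : EuclideanSpace ℝ (Fin p) →L[ℝ] EuclideanSpace ℝ (Fin p)) := by
      ext x; simp
    rw [e0]
    exact exp_zero
  have hΦG : ∀ s ∈ Set.Icc (-v) (0:ℝ), ‖Φ s‖ ≤ G := by
    intro s hs
    have h1 := ode_growth (by linarith : -v ≤ (0:ℝ)) hΦd (fun s _ => h𝔄K)
      (by rw [hΦuv, ContinuousLinearMap.one_def]; exact ContinuousLinearMap.norm_id_le) s hs
    refine h1.trans (Real.exp_le_exp.mpr ?_)
    exact mul_le_mul_of_nonneg_left (by linarith [hs.1, hs.2]) hK0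
  have hΦ0 : Φ 0 = Matrix.toEuclideanCLM (𝕜 := ℝ) (exp (v • A t)) := by
    rw [T_exp, _root_.map_smul]
    simp [hΦdef]
  rw [← hΦ0]
  have key : ∀ ε : ℝ, 0 < ε → ∀ᶠ N : ℕ in atTop,
      ‖Matrix.toEuclideanCLM (𝕜 := ℝ) (P N (-v)) - Φ 0‖ ≤ gronwallBound 0 K (ε * G) v := by
    intro ε hε
    have hTAt : ContinuousAt (fun r : ℝ => Matrix.toEuclideanCLM (𝕜 := ℝ) (A r)) t :=
      ((T_continuous p).comp hA).continuousAt
    obtain ⟨δ', hδ'0, hδ'⟩ := Metric.continuousAt_iff.mp hTAt ε hε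
    filter_upwards [eventually_ge_atTop 1, eventually_gt_atTop ⌈v / δ'⌉₊] with N hN1 hN2
    obtain ⟨g, hg0, hgd, hgP⟩ := sol_aux t hP hN1 hv
    have hcoefK : ∀ s ∈ Set.Icc (-v) (0:ℝ),
        ‖Matrix.toEuclideanCLM (𝕜 := ℝ) (A (s / N + t))‖ ≤ K :=
      fun s hs => hK _ (shift_mem hN1 le_rfl hs)
    have hcoefd : ∀ s ∈ Set.Icc (-v) (0:ℝ),
        ‖Matrix.toEuclideanCLM (𝕜 := ℝ) (A (s / N + t))
          - Matrix.toEuclideanCLM (𝕜 := ℝ) (A t)‖ ≤ ε := by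
      intro s hs
      have hN' : (1:ℝ) ≤ (N:ℝ) := by exact_mod_cast hN1
      have hN0 : (0:ℝ) < N := by linarith
      have hNv : v / δ' < (N:ℝ) := by
        calc v / δ' ≤ (⌈v / δ'⌉₊ : ℝ) := Nat.le_ceil _
          _ < N := by exact_mod_cast hN2
      have hdist : dist (s / N + t) t < δ' := by
        rw [Real.dist_eq]
        have h1 : |s / (N:ℝ) + t - t| = |s| / N := by
          rw [add_sub_cancel_right, abs_div, Nat.abs_cast]
        rw [h1]
        have h2 : |s| ≤ v := abs_le.mpr ⟨hs.1, by linarith [hs.2]⟩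
        calc |s| / (N:ℝ) ≤ v / N := (div_le_div_iff_of_pos_right hN0).mpr h2
          _ < δ' := by
            rw [div_lt_iff₀ hN0]
            have h3 : v < (N:ℝ) * δ' := by
              have := (div_lt_iff₀ hδ'0).mp hNv
              linarith [this]
            linarith [h3]
      have h4 := hδ' hdist
      rw [dist_eq_norm] at h4
      exact h4.le
    have hfin := ode_comparison (by linarith : -v ≤ (0:ℝ)) hε.le hgd hΦd hcoefK hΦG hcoefd
      (by rw [hg0, hΦuv, sub_self, norm_zero])
    rw [zero_sub, neg_neg] at hfin
    rw [hgP]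
    exact hfin
  have hb : Tendsto (fun ε : ℝ => gronwallBound 0 K (ε * G) v) (nhds 0) (nhds 0) := by
    have hc : Continuous fun ε : ℝ => gronwallBound 0 K (ε * G) v :=
      (gronwallBound_continuous_ε 0 K v).comp (continuous_id.mul continuous_const)
    have h0 : gronwallBound 0 K ((0:ℝ) * G) v = 0 := by rw [zero_mul, gronwallBound_ε0_δ0]
    have h5 := hc.tendsto 0
    rw [h0] at h5
    exact h5
  rw [tendsto_iff_norm_sub_tendsto_zero]
  rw [Metric.tendsto_atTop]
  intro δ hδ
  have h1 : ∀ᶠ ε in nhdsWithin (0:ℝ) (Set.Ioi 0), gronwallBound 0 K (ε * G) v < δ :=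
    (hb.eventually (gt_mem_nhds hδ)).filter_mono nhdsWithin_le_nhds
  obtain ⟨ε, hεlt, hε0⟩ := (h1.and self_mem_nhdsWithin).exists
  obtain ⟨N₀, hN₀⟩ := eventually_atTop.mp (key ε hε0)
  refine ⟨N₀, fun n hn => ?_⟩
  have h2 := hN₀ n hn
  rw [dist_zero_right, Real.norm_eq_abs, abs_of_nonneg (norm_nonneg _)]
  exact lt_of_le_of_lt h2 hεlt

lemma cont_aux {p : ℕ} {A : ℝ → Matrix (Fin p) (Fin p) ℝ} (hA : Continuous A) (t : ℝ)
    {P : ℕ → ℝ → Matrix (Fin p) (Fin p) ℝ}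
    (hP : ∀ N : ℕ, 1 ≤ N → ∀ u ≤ (0 : ℝ), ∃ Ψ : ℝ → Matrix (Fin p) (Fin p) ℝ,
      Ψ u = 1 ∧
        (∀ s ∈ Set.Icc u (0 : ℝ), ∀ i j : Fin p,
          HasDerivAt (fun r => Ψ r i j) ((A (s / N + t) * Ψ s) i j) s) ∧
        P N u = Ψ 0)
    {N : ℕ} (hN : 1 ≤ N) :
    ContinuousOn (fun v : ℝ => Matrix.toEuclideanCLM (𝕜 := ℝ) (P N (-v))) (Set.Ioi 0) := by
  intro v₀ hv₀
  have hv₀' : (0:ℝ) < v₀ := hv₀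
  suffices h : ContinuousAt (fun v : ℝ => Matrix.toEuclideanCLM (𝕜 := ℝ) (P N (-v))) v₀ from
    h.continuousWithinAt
  set R := v₀ + 1 with hR
  obtain ⟨r₀, hr₀mem, hr₀⟩ := isCompact_Icc.exists_isMaxOn (s := Set.Icc (t - R) t)
    ⟨t, by constructor <;> [linarith; exact le_refl t]⟩
    (((T_continuous p).comp hA).norm.continuousOn)
  set K := ‖Matrix.toEuclideanCLM (𝕜 := ℝ) (A r₀)‖ with hKdef
  have hK0 : 0 ≤ K := norm_nonneg _
  have hK : ∀ r ∈ Set.Icc (t - R) t, ‖Matrix.toEuclideanCLM (𝕜 := ℝ) (A r)‖ ≤ K :=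
    fun r hr => hr₀ hr
  set G := Real.exp (K * R) with hGdef
  have hG0 : (0:ℝ) ≤ G := (Real.exp_pos _).le
  set L := K * G * Real.exp (K * R) with hLdef
  have hL0 : 0 ≤ L := by positivity
  have est : ∀ v w : ℝ, 0 < v → v ≤ w → w ≤ R →
      ‖Matrix.toEuclideanCLM (𝕜 := ℝ) (P N (-w))
        - Matrix.toEuclideanCLM (𝕜 := ℝ) (P N (-v))‖ ≤ L * (w - v) := by
    intro v w hv hvw hwR
    have hw : 0 < w := lt_of_lt_of_le hv hvw
    obtain ⟨g, hg0, hgd, hgP⟩ := sol_aux t hP hN hw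
    obtain ⟨g', hg'0, hg'd, hg'P⟩ := sol_aux t hP hN hv
    have hcoefK : ∀ s ∈ Set.Icc (-w) (0:ℝ),
        ‖Matrix.toEuclideanCLM (𝕜 := ℝ) (A (s / N + t))‖ ≤ K :=
      fun s hs => hK _ (shift_mem hN hwR hs)
    have hgG : ∀ s ∈ Set.Icc (-w) (0:ℝ), ‖g s‖ ≤ G := by
      intro s hs
      have h1 := ode_growth (by linarith : -w ≤ (0:ℝ)) hgd hcoefK
        (by rw [hg0, ContinuousLinearMap.one_def]; exact ContinuousLinearMap.norm_id_le) s hs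
      refine h1.trans (Real.exp_le_exp.mpr ?_)
      exact mul_le_mul_of_nonneg_left (by linarith [hs.1, hs.2]) hK0
    have hmvt : ‖g (-v) - g (-w)‖ ≤ K * G * (w - v) := by
      have h1 := Convex.norm_image_sub_le_of_norm_hasDerivWithin_le (f := g)
        (f' := fun s => Matrix.toEuclideanCLM (𝕜 := ℝ) (A (s / N + t)) * g s)
        (C := K * G) (s := Set.Icc (-w) (0:ℝ))
        (fun s hs => (hgd s hs).hasDerivWithinAt)
        (fun s hs =>
          calc ‖Matrix.toEuclideanCLM (𝕜 := ℝ) (A (s / N + t)) * g s‖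
              ≤ ‖Matrix.toEuclideanCLM (𝕜 := ℝ) (A (s / N + t))‖ * ‖g s‖ := norm_mul_le _ _
            _ ≤ K * G := mul_le_mul (hcoefK s hs) (hgG s hs) (norm_nonneg _) hK0)
        (convex_Icc _ _) (x := -w) (y := -v)
        (Set.mem_Icc.mpr ⟨le_refl (-w), by linarith⟩)
        (Set.mem_Icc.mpr ⟨by linarith, by linarith⟩)
      have h2 : ‖(-v : ℝ) - (-w)‖ = w - v := by
        rw [Real.norm_eq_abs, abs_of_nonneg (by linarith)]
        ring
      rw [h2] at h1
      exact h1
    have hsub : Set.Icc (-v) (0:ℝ) ⊆ Set.Icc (-w) (0:ℝ) :=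
      Set.Icc_subset_Icc (by linarith) le_rfl
    have hδ1 : ‖g' (-v) - g (-v)‖ ≤ K * G * (w - v) := by
      rw [hg'0]
      calc ‖(1 : EuclideanSpace ℝ (Fin p) →L[ℝ] EuclideanSpace ℝ (Fin p)) - g (-v)‖
          = ‖g (-v) - 1‖ := norm_sub_rev _ _
        _ = ‖g (-v) - g (-w)‖ := by rw [hg0]
        _ ≤ K * G * (w - v) := hmvt
    have hfin := ode_comparison (by linarith : -v ≤ (0:ℝ)) (le_refl (0:ℝ))
      hg'd (fun s hs => hgd s (hsub hs))
      (fun s hs => hcoefK s (hsub hs)) (fun s hs => hgG s (hsub hs))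
      (fun s hs => by rw [sub_self, norm_zero]) hδ1
    rw [hgP, hg'P, norm_sub_rev]
    refine hfin.trans ?_
    rw [zero_mul, gronwallBound_ε0, zero_sub, neg_neg]
    have he : Real.exp (K * v) ≤ Real.exp (K * R) :=
      Real.exp_le_exp.mpr (mul_le_mul_of_nonneg_left (by linarith) hK0)
    calc K * G * (w - v) * Real.exp (K * v)
        ≤ K * G * (w - v) * Real.exp (K * R) :=
          mul_le_mul_of_nonneg_left he
            (mul_nonneg (mul_nonneg hK0 hG0) (by linarith))
      _ = L * (w - v) := by rw [hLdef]; ring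
  rw [ContinuousAt, tendsto_iff_dist_tendsto_zero]
  have hmem : Set.Ioo (0:ℝ) R ∈ nhds v₀ := isOpen_Ioo.mem_nhds ⟨hv₀', by rw [hR]; linarith⟩
  refine squeeze_zero' (Filter.Eventually.of_forall fun v => dist_nonneg)
    (g := fun v => L * |v - v₀|) ?_ ?_
  · filter_upwards [hmem] with v hvmem
    rcases le_total v v₀ with hle | hle
    · rw [dist_eq_norm, norm_sub_rev]
      have h1 := est v v₀ hvmem.1 hle (by rw [hR]; linarith)
      refine h1.trans ?_
      rw [abs_sub_comm, abs_of_nonneg (by linarith)]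
    · rw [dist_eq_norm]
      have h1 := est v₀ v hv₀' hle hvmem.2.le
      refine h1.trans ?_
      rw [abs_of_nonneg (by linarith)]
  · have h1 : Tendsto (fun v : ℝ => L * |v - v₀|) (nhds v₀) (nhds (L * |v₀ - v₀|)) :=
      (continuous_const.mul ((continuous_id.sub continuous_const).abs)).tendsto v₀
    simpa using h1

end Aux

lemma iota_cont (p : ℕ) :
    Continuous fun y : (Fin p → ℝ) => (WithLp.equiv 2 (Fin p → ℝ)).symm y :=
  (PiLp.continuousLinearEquiv 2 ℝ (fun _ : Fin p => ℝ)).symm.continuous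

/-- Proposition 4.12 (analytic content): under continuity of the coefficients, boundedness of
`C`, and a uniform `L²` domination of the transition matrices `Ψ_{N,t}(0,u)`, the kernels of
the time-varying state space process converge in `L²` to the frozen-coefficient kernel
`v ↦ B(t)ᵀ e^{vA(t)} C(t)`. -/
theorem tv_state_space_locally_stationary
    (p : ℕ) (hp : 1 ≤ p)
    (A : ℝ → Matrix (Fin p) (Fin p) ℝ) (B C : ℝ → Fin p → ℝ)
    (hA : Continuous A) (hB : Continuous B) (hC : Continuous C)
    (hCbdd : ∃ M : ℝ, ∀ s : ℝ, ‖C s‖ ≤ M)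
    (t : ℝ)
    (P : ℕ → ℝ → Matrix (Fin p) (Fin p) ℝ)
    (hP : ∀ N : ℕ, 1 ≤ N → ∀ u ≤ (0 : ℝ), ∃ Ψ : ℝ → Matrix (Fin p) (Fin p) ℝ,
      Ψ u = 1 ∧
        (∀ s ∈ Set.Icc u (0 : ℝ), ∀ i j : Fin p,
          HasDerivAt (fun r => Ψ r i j) ((A (s / N + t) * Ψ s) i j) s) ∧
        P N u = Ψ 0)
    (F : ℝ → ℝ)
    (hF : MemLp F 2 ((volume : Measure ℝ).restrict (Set.Iic (0 : ℝ))))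
    (hdom : ∀ N : ℕ, 1 ≤ N → ∀ u ≤ (0 : ℝ),
      ‖Matrix.toEuclideanCLM (𝕜 := ℝ) (P N u)‖ ≤ F u) :
    Tendsto (fun N : ℕ => ∫ v in Set.Ioi (0 : ℝ),
        (B t ⬝ᵥ (P N (-v)).mulVec (C (-v / N + t)) -
          B t ⬝ᵥ (exp (v • A t)).mulVec (C t)) ^ 2)
      atTop (nhds 0) := by
  obtain ⟨M₀, hM₀⟩ := hCbdd
  have hM₀0 : 0 ≤ M₀ := le_trans (norm_nonneg _) (hM₀ 0)
  set cE : ℝ := Real.sqrt p * M₀ with hcEdef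
  have hcE0 : 0 ≤ cE := mul_nonneg (Real.sqrt_nonneg _) hM₀0
  have hCE : ∀ s : ℝ, ‖(WithLp.equiv 2 (Fin p → ℝ)).symm (C s)‖ ≤ cE := fun s =>
    (euclid_norm_le _).trans (mul_le_mul_of_nonneg_left (hM₀ s) (Real.sqrt_nonneg _))
  set nB : ℝ := ‖(WithLp.equiv 2 (Fin p → ℝ)).symm (B t)‖ with hnBdef
  have hnB0 : 0 ≤ nB := norm_nonneg _
  have hF0 : ∀ u : ℝ, u ≤ 0 → 0 ≤ F u := fun u hu =>
    le_trans (norm_nonneg _) (hdom 1 le_rfl u hu)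
  -- general scalar bound
  have hbd : ∀ (M : Matrix (Fin p) (Fin p) ℝ) (s : ℝ),
      |inner (𝕜 := ℝ) ((WithLp.equiv 2 (Fin p → ℝ)).symm (B t))
        (Matrix.toEuclideanCLM (𝕜 := ℝ) M ((WithLp.equiv 2 (Fin p → ℝ)).symm (C s)))|
        ≤ nB * (‖Matrix.toEuclideanCLM (𝕜 := ℝ) M‖ * cE) := by
    intro M s
    refine le_trans (abs_real_inner_le_norm _ _) ?_
    refine mul_le_mul_of_nonneg_left ?_ hnB0
    calc ‖Matrix.toEuclideanCLM (𝕜 := ℝ) M ((WithLp.equiv 2 (Fin p → ℝ)).symm (C s))‖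
        ≤ ‖Matrix.toEuclideanCLM (𝕜 := ℝ) M‖
            * ‖(WithLp.equiv 2 (Fin p → ℝ)).symm (C s)‖ :=
          (Matrix.toEuclideanCLM (𝕜 := ℝ) M).le_opNorm _
      _ ≤ ‖Matrix.toEuclideanCLM (𝕜 := ℝ) M‖ * cE :=
          mul_le_mul_of_nonneg_left (hCE s) (norm_nonneg _)
  -- norm bound on the limiting operator
  have hExp_bd : ∀ v : ℝ, 0 < v →
      ‖Matrix.toEuclideanCLM (𝕜 := ℝ) (exp (v • A t))‖ ≤ F (-v) := by
    intro v hv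
    have h1 := (conv_aux hA t hP hv).norm
    refine le_of_tendsto h1 ?_
    filter_upwards [eventually_ge_atTop 1] with N hN using hdom N hN (-v) (by linarith)
  -- integrability of the dominating function
  have hFm : IntegrableOn (fun v : ℝ => (2 * (nB * cE)) ^ 2 * F (-v) ^ 2)
      (Set.Ioi (0:ℝ)) volume := by
    have h1 : IntegrableOn (fun x : ℝ => F x ^ 2) (Set.Iic (0:ℝ)) volume := hF.integrable_sq
    have h2 : IntegrableOn (fun x : ℝ => F x ^ 2) (Set.Iio (0:ℝ)) volume :=
      h1.mono_set Set.Iio_subset_Iic_self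
    have h3 := (Measure.measurePreserving_neg (volume : Measure ℝ)).integrableOn_comp_preimage
      (Homeomorph.neg ℝ).measurableEmbedding (f := fun x : ℝ => F x ^ 2) (s := Set.Iio (0:ℝ))
    have h4 := h3.mpr h2
    have h5 : ((Neg.neg : ℝ → ℝ) ⁻¹' Set.Iio (0:ℝ)) = Set.Ioi (0:ℝ) := by
      ext x; simp
    rw [h5] at h4
    have h6 : IntegrableOn (fun v : ℝ => F (-v) ^ 2) (Set.Ioi (0:ℝ)) volume := by
      simpa [Function.comp_def] using h4
    exact h6.const_mul _
  -- measurability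
  have hmeas : ∀ n : ℕ, AEStronglyMeasurable
      (fun v : ℝ => (inner (𝕜 := ℝ) ((WithLp.equiv 2 (Fin p → ℝ)).symm (B t))
          (Matrix.toEuclideanCLM (𝕜 := ℝ) (P (n+1) (-v))
            ((WithLp.equiv 2 (Fin p → ℝ)).symm (C (-v / (↑(n+1):ℝ) + t))))
        - inner (𝕜 := ℝ) ((WithLp.equiv 2 (Fin p → ℝ)).symm (B t))
          (Matrix.toEuclideanCLM (𝕜 := ℝ) (exp (v • A t))
            ((WithLp.equiv 2 (Fin p → ℝ)).symm (C t)))) ^ 2)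
      (volume.restrict (Set.Ioi (0:ℝ))) := by
    intro n
    have hc1 : ContinuousOn (fun v : ℝ => Matrix.toEuclideanCLM (𝕜 := ℝ) (P (n+1) (-v)))
        (Set.Ioi (0:ℝ)) := cont_aux hA t hP (Nat.le_add_left 1 n)
    have hc2 : Continuous fun v : ℝ =>
        (WithLp.equiv 2 (Fin p → ℝ)).symm (C (-v / (↑(n+1):ℝ) + t)) := by
      exact (iota_cont p).comp (hC.comp (by continuity))
    have hTe : (fun v : ℝ => Matrix.toEuclideanCLM (𝕜 := ℝ) (exp (v • A t)))
        = fun v : ℝ => exp (v • Matrix.toEuclideanCLM (𝕜 := ℝ) (A t)) :=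
      funext fun v => by rw [T_exp, _root_.map_smul]
    have hbc : Continuous fun v : ℝ =>
        inner (𝕜 := ℝ) ((WithLp.equiv 2 (Fin p → ℝ)).symm (B t))
          (Matrix.toEuclideanCLM (𝕜 := ℝ) (exp (v • A t))
            ((WithLp.equiv 2 (Fin p → ℝ)).symm (C t))) := by
      have h1 : Continuous fun v : ℝ =>
          exp (v • Matrix.toEuclideanCLM (𝕜 := ℝ) (A t)) :=
        continuous_iff_continuousAt.mpr fun v =>
          (hasDerivAt_exp_smul_const (𝕂 := ℝ)
            (Matrix.toEuclideanCLM (𝕜 := ℝ) (A t)) v).continuousAt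
      have h2 : Continuous fun v : ℝ =>
          Matrix.toEuclideanCLM (𝕜 := ℝ) (exp (v • A t)) := by rw [hTe]; exact h1
      exact continuous_const.inner (h2.clm_apply continuous_const)
    exact (((ContinuousOn.inner continuousOn_const
      (hc1.clm_apply hc2.continuousOn)).sub hbc.continuousOn).pow 2).aestronglyMeasurable
      measurableSet_Ioi
  -- domination
  have h_bound : ∀ n : ℕ, ∀ᵐ v ∂(volume.restrict (Set.Ioi (0:ℝ))),
      ‖(inner (𝕜 := ℝ) ((WithLp.equiv 2 (Fin p → ℝ)).symm (B t))
          (Matrix.toEuclideanCLM (𝕜 := ℝ) (P (n+1) (-v))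
            ((WithLp.equiv 2 (Fin p → ℝ)).symm (C (-v / (↑(n+1):ℝ) + t))))
        - inner (𝕜 := ℝ) ((WithLp.equiv 2 (Fin p → ℝ)).symm (B t))
          (Matrix.toEuclideanCLM (𝕜 := ℝ) (exp (v • A t))
            ((WithLp.equiv 2 (Fin p → ℝ)).symm (C t))) ) ^ 2‖
        ≤ (2 * (nB * cE)) ^ 2 * F (-v) ^ 2 := by
    intro n
    refine (ae_restrict_iff' measurableSet_Ioi).2 (Filter.Eventually.of_forall fun v hv => ?_)
    have hv' : (0:ℝ) < v := hv
    have hFv : 0 ≤ F (-v) := hF0 (-v) (by linarith)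
    set a := inner (𝕜 := ℝ) ((WithLp.equiv 2 (Fin p → ℝ)).symm (B t))
          (Matrix.toEuclideanCLM (𝕜 := ℝ) (P (n+1) (-v))
            ((WithLp.equiv 2 (Fin p → ℝ)).symm (C (-v / (↑(n+1):ℝ) + t)))) with hadef
    set b := inner (𝕜 := ℝ) ((WithLp.equiv 2 (Fin p → ℝ)).symm (B t))
          (Matrix.toEuclideanCLM (𝕜 := ℝ) (exp (v • A t))
            ((WithLp.equiv 2 (Fin p → ℝ)).symm (C t))) with hbdef
    have hva : |a| ≤ nB * (F (-v) * cE) := by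
      refine (hbd _ _).trans ?_
      exact mul_le_mul_of_nonneg_left
        (mul_le_mul_of_nonneg_right (hdom (n+1) (Nat.le_add_left 1 n) (-v) (by linarith)) hcE0)
        hnB0
    have hvb : |b| ≤ nB * (F (-v) * cE) := by
      refine (hbd _ _).trans ?_
      exact mul_le_mul_of_nonneg_left
        (mul_le_mul_of_nonneg_right (hExp_bd v hv') hcE0) hnB0
    have habs : |a - b| ≤ 2 * (nB * cE) * F (-v) := by
      calc |a - b| ≤ |a| + |b| := abs_sub a b
        _ ≤ nB * (F (-v) * cE) + nB * (F (-v) * cE) := add_le_add hva hvb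
        _ = 2 * (nB * cE) * F (-v) := by ring
    rw [Real.norm_eq_abs, abs_of_nonneg (sq_nonneg _)]
    calc (a - b) ^ 2 = |a - b| ^ 2 := (sq_abs _).symm
      _ ≤ (2 * (nB * cE) * F (-v)) ^ 2 :=
          pow_le_pow_left₀ (abs_nonneg _) habs 2
      _ = (2 * (nB * cE)) ^ 2 * F (-v) ^ 2 := by ring
  -- pointwise limit
  have h_lim : ∀ᵐ v ∂(volume.restrict (Set.Ioi (0:ℝ))),
      Tendsto (fun n : ℕ => (inner (𝕜 := ℝ) ((WithLp.equiv 2 (Fin p → ℝ)).symm (B t))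
          (Matrix.toEuclideanCLM (𝕜 := ℝ) (P (n+1) (-v))
            ((WithLp.equiv 2 (Fin p → ℝ)).symm (C (-v / (↑(n+1):ℝ) + t))))
        - inner (𝕜 := ℝ) ((WithLp.equiv 2 (Fin p → ℝ)).symm (B t))
          (Matrix.toEuclideanCLM (𝕜 := ℝ) (exp (v • A t))
            ((WithLp.equiv 2 (Fin p → ℝ)).symm (C t)))) ^ 2)
        atTop (nhds 0) := by
    refine (ae_restrict_iff' measurableSet_Ioi).2 (Filter.Eventually.of_forall fun v hv => ?_)
    have hv' : (0:ℝ) < v := hv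
    have h1 : Tendsto (fun N : ℕ => Matrix.toEuclideanCLM (𝕜 := ℝ) (P N (-v))) atTop
        (nhds (Matrix.toEuclideanCLM (𝕜 := ℝ) (exp (v • A t)))) := conv_aux hA t hP hv'
    have harg : Tendsto (fun N : ℕ => -v / (N:ℝ) + t) atTop (nhds t) := by
      have h := Filter.Tendsto.add_const t (tendsto_const_div_atTop_nhds_zero_nat (-v))
      simpa using h
    have h2 : Tendsto (fun N : ℕ => (WithLp.equiv 2 (Fin p → ℝ)).symm (C (-v / (N:ℝ) + t)))
        atTop (nhds ((WithLp.equiv 2 (Fin p → ℝ)).symm (C t))) :=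
      (((iota_cont p).comp hC).tendsto t).comp harg
    have h3 : Tendsto (fun N : ℕ => Matrix.toEuclideanCLM (𝕜 := ℝ) (P N (-v))
          ((WithLp.equiv 2 (Fin p → ℝ)).symm (C (-v / (N:ℝ) + t)))) atTop
        (nhds (Matrix.toEuclideanCLM (𝕜 := ℝ) (exp (v • A t))
          ((WithLp.equiv 2 (Fin p → ℝ)).symm (C t)))) :=
      (isBoundedBilinearMap_apply.continuous.tendsto _).comp (h1.prodMk_nhds h2)
    have h4 : Tendsto (fun N : ℕ =>
        inner (𝕜 := ℝ) ((WithLp.equiv 2 (Fin p → ℝ)).symm (B t))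
          (Matrix.toEuclideanCLM (𝕜 := ℝ) (P N (-v))
            ((WithLp.equiv 2 (Fin p → ℝ)).symm (C (-v / (N:ℝ) + t))))
        - inner (𝕜 := ℝ) ((WithLp.equiv 2 (Fin p → ℝ)).symm (B t))
          (Matrix.toEuclideanCLM (𝕜 := ℝ) (exp (v • A t))
            ((WithLp.equiv 2 (Fin p → ℝ)).symm (C t)))) atTop (nhds 0) := by
      have h5 := Filter.Tendsto.inner (𝕜 := ℝ)
        (tendsto_const_nhds (x := (WithLp.equiv 2 (Fin p → ℝ)).symm (B t))) h3
      have h6 := h5.sub (tendsto_const_nhds (x := inner (𝕜 := ℝ)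
        ((WithLp.equiv 2 (Fin p → ℝ)).symm (B t))
          (Matrix.toEuclideanCLM (𝕜 := ℝ) (exp (v • A t))
            ((WithLp.equiv 2 (Fin p → ℝ)).symm (C t)))))
      simpa using h6
    have h7 : Tendsto (fun N : ℕ =>
        (inner (𝕜 := ℝ) ((WithLp.equiv 2 (Fin p → ℝ)).symm (B t))
          (Matrix.toEuclideanCLM (𝕜 := ℝ) (P N (-v))
            ((WithLp.equiv 2 (Fin p → ℝ)).symm (C (-v / (N:ℝ) + t))))
        - inner (𝕜 := ℝ) ((WithLp.equiv 2 (Fin p → ℝ)).symm (B t))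
          (Matrix.toEuclideanCLM (𝕜 := ℝ) (exp (v • A t))
            ((WithLp.equiv 2 (Fin p → ℝ)).symm (C t)))) ^ 2) atTop (nhds 0) := by
      have := h4.pow 2
      simpa using this
    exact h7.comp (tendsto_add_atTop_nat 1)
  -- assemble
  simp only [dot_eq_inner]
  refine (tendsto_add_atTop_iff_nat 1).mp ?_
  have hfinal := tendsto_integral_of_dominated_convergence _ hmeas hFm h_bound h_lim
  simpa using hfinal
end

section
/- Let p ≥ 1, s₀ ∈ ℝ, and let A : ℝ → M_{p×p}(ℝ) be continuous. Let Ψ : [s₀, ∞) → M_{p×p}(ℝ) satisfy Ψ(s₀) = I_p and dΨ/ds (s) = A(s) Ψ(s) for all s ≥ s₀. Suppose ℓ : ℝ → ℝ is a locally integrable function such that ⟨x, (A(ν) + A(ν)ᵀ) x⟩ ≤ ℓ(ν) ‖x‖² for all x ∈ ℝ^p and all ν ≥ s₀ (i.e. ℓ(ν) dominates the largest eigenvalue of A(ν) + A(ν)ᵀ), and suppose there are constants λ > 0 and γ > 0 with ∫_{s₀}^{s} ℓ(ν) dν ≤ −λ(s − s₀) + γ for all s ≥ s₀. Then ‖Ψ(s)‖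 ≤ e^{γ/2} · e^{−(λ/2)(s − s₀)} for all s ≥ s₀, where ‖·‖ is the operator norm induced by the Euclidean norm. -/
open Matrix Filter intervalIntegral MeasureTheory

section Aux

variable {p : ℕ}

lemma quad_abs_le (B : Matrix (Fin p) (Fin p) ℝ) (x : Fin p → ℝ) (hx : x ⬝ᵥ x = 1) :
    |x ⬝ᵥ B.mulVec x| ≤ ∑ i, ∑ j, |B i j| := by
  have hxi : ∀ i, |x i| ≤ 1 := by
    intro i
    have h : x i ^ 2 ≤ x ⬝ᵥ x := by
      rw [dotProduct, sq]
      exact Finset.single_le_sum (f := fun j => x j * x j)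
        (fun j _ => mul_self_nonneg _) (Finset.mem_univ i)
    rw [hx] at h
    rw [abs_le]; constructor <;> nlinarith
  calc |x ⬝ᵥ B.mulVec x| ≤ ∑ i, |x i * (B.mulVec x) i| := by
        rw [dotProduct]; exact Finset.abs_sum_le_sum_abs _ _
    _ ≤ ∑ i, ∑ j, |B i j| := by
        apply Finset.sum_le_sum
        intro i _
        rw [abs_mul, mulVec, dotProduct]
        calc |x i| * |∑ j, B i j * x j| ≤ 1 * ∑ j, |B i j * x j| := by
              apply mul_le_mul (hxi i) (Finset.abs_sum_le_sum_abs _ _) (abs_nonneg _) zero_le_one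
          _ = ∑ j, |B i j| * |x j| := by rw [one_mul]; simp [abs_mul]
          _ ≤ ∑ j, |B i j| * 1 := by
              exact Finset.sum_le_sum fun j _ => mul_le_mul_of_nonneg_left (hxi j) (abs_nonneg _)
          _ = ∑ j, |B i j| := by simp

noncomputable def qsup (B : Matrix (Fin p) (Fin p) ℝ) : ℝ :=
  sSup ((fun x : Fin p → ℝ => x ⬝ᵥ B.mulVec x) '' {x | x ⬝ᵥ x = 1})

lemma sphere_nonempty' (hp : 1 ≤ p) : ({x : Fin p → ℝ | x ⬝ᵥ x = 1}).Nonempty := by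
  refine ⟨Pi.single ⟨0, hp⟩ 1, ?_⟩
  simp [dotProduct, Pi.single_apply]

lemma qsup_bddAbove (B : Matrix (Fin p) (Fin p) ℝ) :
    BddAbove ((fun x : Fin p → ℝ => x ⬝ᵥ B.mulVec x) '' {x | x ⬝ᵥ x = 1}) := by
  refine ⟨∑ i, ∑ j, |B i j|, ?_⟩
  rintro y ⟨x, hx, rfl⟩
  exact (le_abs_self _).trans (quad_abs_le B x hx)

lemma le_qsup (B : Matrix (Fin p) (Fin p) ℝ) (x : Fin p → ℝ) (hx : x ⬝ᵥ x = 1) :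
    x ⬝ᵥ B.mulVec x ≤ qsup B :=
  le_csSup (qsup_bddAbove B) ⟨x, hx, rfl⟩

lemma qsup_le (hp : 1 ≤ p) (B : Matrix (Fin p) (Fin p) ℝ) (c : ℝ)
    (h : ∀ x : Fin p → ℝ, x ⬝ᵥ x = 1 → x ⬝ᵥ B.mulVec x ≤ c) : qsup B ≤ c :=
  csSup_le ((sphere_nonempty' hp).image _) (by rintro y ⟨x, hx, rfl⟩; exact h x hx)

lemma quad_le_qsup (hp : 1 ≤ p) (B : Matrix (Fin p) (Fin p) ℝ) (v : Fin p → ℝ) :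
    v ⬝ᵥ B.mulVec v ≤ qsup B * (v ⬝ᵥ v) := by
  rcases eq_or_ne v 0 with rfl | hv
  · simp
  · have hvv : 0 < v ⬝ᵥ v := by
      have h2 : v ⬝ᵥ v = ∑ i, v i ^ 2 := by simp [dotProduct, sq]
      rw [h2]
      apply Finset.sum_pos' (fun i _ => sq_nonneg _)
      obtain ⟨i, hi⟩ := Function.ne_iff.mp hv
      exact ⟨i, Finset.mem_univ i, by simp at hi; positivity⟩
    set c := (Real.sqrt (v ⬝ᵥ v))⁻¹ with hc
    have hc2 : c ^ 2 * (v ⬝ᵥ v) = 1 := by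
      rw [hc, sq, ← mul_inv, Real.mul_self_sqrt hvv.le]
      exact inv_mul_cancel₀ hvv.ne'
    have hx : (c • v) ⬝ᵥ (c • v) = 1 := by
      rw [smul_dotProduct, dotProduct_smul, smul_eq_mul, smul_eq_mul, ← mul_assoc, ← sq]
      exact hc2
    have hle := le_qsup B (c • v) hx
    have hexp : (c • v) ⬝ᵥ B.mulVec (c • v) = c ^ 2 * (v ⬝ᵥ B.mulVec v) := by
      rw [mulVec_smul, smul_dotProduct, dotProduct_smul, smul_eq_mul, smul_eq_mul, ← mul_assoc, sq]
    rw [hexp] at hle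
    calc v ⬝ᵥ B.mulVec v = (c ^ 2 * (v ⬝ᵥ v)) * (v ⬝ᵥ B.mulVec v) := by rw [hc2, one_mul]
      _ = (c ^ 2 * (v ⬝ᵥ B.mulVec v)) * (v ⬝ᵥ v) := by ring
      _ ≤ qsup B * (v ⬝ᵥ v) := mul_le_mul_of_nonneg_right hle hvv.le

/-- Lipschitz-type bound on qsup -/
lemma qsup_sub_le (hp : 1 ≤ p) (B C : Matrix (Fin p) (Fin p) ℝ) :
    qsup B ≤ qsup C + ∑ i, ∑ j, |B i j - C i j| := by
  apply qsup_le hp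
  intro x hx
  have h1 : x ⬝ᵥ B.mulVec x = x ⬝ᵥ C.mulVec x + x ⬝ᵥ (B - C).mulVec x := by
    rw [sub_mulVec, dotProduct_sub]; ring
  rw [h1]
  have h2 := (le_abs_self _).trans (quad_abs_le (B - C) x hx)
  have h3 := le_qsup C x hx
  simp only [Matrix.sub_apply] at h2
  linarith

end Aux

section Cont

variable {p : ℕ}

lemma qsup_continuous (hp : 1 ≤ p) (M : ℝ → Matrix (Fin p) (Fin p) ℝ) (hM : Continuous M) :
    Continuous (fun ν => qsup (M ν)) := by
  rw [continuous_iff_continuousAt]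
  intro ν
  rw [ContinuousAt, tendsto_iff_dist_tendsto_zero]
  have hent : ∀ i j : Fin p, Continuous fun x => M x i j := fun i j =>
    (continuous_apply j).comp ((continuous_apply i).comp hM)
  have hd : Continuous (fun ν' => ∑ i, ∑ j, |M ν' i j - M ν i j|) :=
    continuous_finset_sum _ fun i _ => continuous_finset_sum _ fun j _ =>
      ((hent i j).sub continuous_const).abs
  have key : ∀ ν', dist (qsup (M ν')) (qsup (M ν)) ≤ ∑ i, ∑ j, |M ν' i j - M ν i j| := by
    intro ν'
    rw [Real.dist_eq, abs_le]
    constructor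
    · have := qsup_sub_le hp (M ν) (M ν')
      have heq : (∑ i, ∑ j, |M ν i j - M ν' i j|) = ∑ i, ∑ j, |M ν' i j - M ν i j| := by
        congr 1; ext i; congr 1; ext j; rw [abs_sub_comm]
      linarith [this, heq ▸ this]
    · linarith [qsup_sub_le hp (M ν') (M ν)]
  have h0 : Tendsto (fun ν' => ∑ i, ∑ j, |M ν' i j - M ν i j|) (nhds ν) (nhds 0) := by
    have := hd.tendsto ν
    simpa using this
  exact squeeze_zero (fun _ => dist_nonneg) key h0

end Cont


/-- Proposition 4.15(a): if `⟨x, (A(ν)+A(ν)ᵀ)x⟩ ≤ ℓ(ν)‖x‖²` and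
`∫_{s₀}^s ℓ(ν) dν ≤ −λ(s−s₀) + γ`, then the transition matrix `Ψ` of `Ψ' = A(s)Ψ`, `Ψ(s₀) = I`
satisfies the exponential decay bound `‖Ψ(s)‖ ≤ e^{γ/2} e^{−(λ/2)(s−s₀)}` in the operator norm
induced by the Euclidean norm. -/
theorem uniform_exponential_stability_eigenvalue_bound
    (p : ℕ) (hp : 1 ≤ p) (s₀ : ℝ)
    (A : ℝ → Matrix (Fin p) (Fin p) ℝ) (hA : Continuous A)
    (Ψ : ℝ → Matrix (Fin p) (Fin p) ℝ) (hΨ0 : Ψ s₀ = 1)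
    (hΨ : ∀ s ≥ s₀, ∀ i j : Fin p,
      HasDerivAt (fun r => Ψ r i j) ((A s * Ψ s) i j) s)
    (ℓ : ℝ → ℝ) (hℓ : LocallyIntegrable ℓ (volume : Measure ℝ))
    (hquad : ∀ x : Fin p → ℝ, ∀ ν ≥ s₀,
      x ⬝ᵥ ((A ν + (A ν)ᵀ).mulVec x) ≤ ℓ ν * (x ⬝ᵥ x))
    (lam γ : ℝ) (hlam : 0 < lam) (hγ : 0 < γ)
    (hint : ∀ s ≥ s₀, (∫ ν in s₀..s, ℓ ν) ≤ -lam * (s - s₀) + γ) :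
    ∀ s ≥ s₀, ‖Matrix.toEuclideanCLM (𝕜 := ℝ) (Ψ s)‖ ≤
      Real.exp (γ / 2) * Real.exp (-(lam / 2) * (s - s₀)) := by
  -- the continuous eigenvalue-sup function
  set B : ℝ → Matrix (Fin p) (Fin p) ℝ := fun ν => A ν + (A ν)ᵀ with hB
  have hBcont : Continuous B := hA.add hA.matrix_transpose
  set m : ℝ → ℝ := fun ν => qsup (B ν) with hm
  have hm_cont : Continuous m := qsup_continuous hp B hBcont
  have hmℓ : ∀ ν ≥ s₀, m ν ≤ ℓ ν := by
    intro ν hν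
    apply qsup_le hp
    intro x hx
    have := hquad x ν hν
    rwa [hx, mul_one] at this
  -- integral of m
  set G : ℝ → ℝ := fun s => ∫ ν in s₀..s, m ν with hG
  have hGderiv : ∀ s : ℝ, HasDerivAt G (m s) s := by
    intro s
    exact intervalIntegral.integral_hasDerivAt_right
      (hm_cont.intervalIntegrable s₀ s)
      hm_cont.aestronglyMeasurable.stronglyMeasurableAtFilter
      hm_cont.continuousAt
  have hGbound : ∀ s ≥ s₀, G s ≤ -lam * (s - s₀) + γ := by
    intro s hs
    have h1 : G s ≤ ∫ ν in s₀..s, ℓ ν := by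
      apply intervalIntegral.integral_mono_on hs
        (hm_cont.intervalIntegrable s₀ s)
        ((hℓ.integrableOn_isCompact isCompact_uIcc).intervalIntegrable)
      intro ν hν
      exact hmℓ ν hν.1
    exact h1.trans (hint s hs)
  -- the key quadratic bound for each fixed vector
  have key : ∀ x : Fin p → ℝ, ∀ s ≥ s₀,
      (Ψ s *ᵥ x) ⬝ᵥ (Ψ s *ᵥ x) ≤ Real.exp γ * Real.exp (-lam * (s - s₀)) * (x ⬝ᵥ x) := by
    intro x s hs
    set f : ℝ → ℝ := fun r => (Ψ r *ᵥ x) ⬝ᵥ (Ψ r *ᵥ x) with hf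
    have hfderiv : ∀ r ≥ s₀,
        HasDerivAt f ((Ψ r *ᵥ x) ⬝ᵥ (B r *ᵥ (Ψ r *ᵥ x))) r := by
      intro r hr
      have hcoord : ∀ i, HasDerivAt (fun u => (Ψ u *ᵥ x) i) ((A r *ᵥ (Ψ r *ᵥ x)) i) r := by
        intro i
        have hda : HasDerivAt (fun u => ∑ j, Ψ u i j * x j) (∑ j, (A r * Ψ r) i j * x j) r :=
          HasDerivAt.fun_sum fun j _ => (hΨ r hr i j).mul_const (x j)
        have heq : (A r *ᵥ (Ψ r *ᵥ x)) i = ∑ j, (A r * Ψ r) i j * x j := by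
          rw [Matrix.mulVec_mulVec]
          simp [Matrix.mulVec, dotProduct]
        have heq2 : (fun u => (Ψ u *ᵥ x) i) = fun u => ∑ j, Ψ u i j * x j := by
          funext u; simp [Matrix.mulVec, dotProduct]
        rw [heq2, heq]
        exact hda
      have hdsum : HasDerivAt f
          (∑ i, ((A r *ᵥ (Ψ r *ᵥ x)) i * (Ψ r *ᵥ x) i + (Ψ r *ᵥ x) i * (A r *ᵥ (Ψ r *ᵥ x)) i)) r := by
        have : HasDerivAt (fun u => ∑ i, (Ψ u *ᵥ x) i * (Ψ u *ᵥ x) i)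
            (∑ i, ((A r *ᵥ (Ψ r *ᵥ x)) i * (Ψ r *ᵥ x) i + (Ψ r *ᵥ x) i * (A r *ᵥ (Ψ r *ᵥ x)) i)) r :=
          HasDerivAt.fun_sum fun i _ => (hcoord i).mul (hcoord i)
        simpa [hf, dotProduct] using this
      convert hdsum using 1
      -- v ⬝ᵥ (B v) = 2 ⟨Av, v⟩
      set v := Ψ r *ᵥ x
      have h2 : v ⬝ᵥ (B r *ᵥ v) = v ⬝ᵥ (A r *ᵥ v) + (A r *ᵥ v) ⬝ᵥ v := by
        rw [hB]
        rw [Matrix.add_mulVec, dotProduct_add]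
        congr 1
        rw [Matrix.dotProduct_mulVec, Matrix.vecMul_transpose]
      rw [h2, Finset.sum_add_distrib, dotProduct, dotProduct, add_comm]
    -- the auxiliary decreasing function
    set g : ℝ → ℝ := fun r => f r * Real.exp (-(G r)) with hg
    have hgderiv : ∀ r ≥ s₀, HasDerivAt g
        (((Ψ r *ᵥ x) ⬝ᵥ (B r *ᵥ (Ψ r *ᵥ x))) * Real.exp (-(G r))
          + f r * (Real.exp (-(G r)) * -(m r))) r := by
      intro r hr
      exact (hfderiv r hr).mul (((hGderiv r).neg).exp)
    have hderiv_nonpos : ∀ r ≥ s₀, deriv g r ≤ 0 := by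
      intro r hr
      rw [(hgderiv r hr).deriv]
      have hquadb : (Ψ r *ᵥ x) ⬝ᵥ (B r *ᵥ (Ψ r *ᵥ x)) ≤ m r * f r :=
        quad_le_qsup hp (B r) (Ψ r *ᵥ x)
      have hexp : (0:ℝ) < Real.exp (-(G r)) := Real.exp_pos _
      have : ((Ψ r *ᵥ x) ⬝ᵥ (B r *ᵥ (Ψ r *ᵥ x))) * Real.exp (-(G r))
          + f r * (Real.exp (-(G r)) * -(m r))
          = (((Ψ r *ᵥ x) ⬝ᵥ (B r *ᵥ (Ψ r *ᵥ x))) - m r * f r) * Real.exp (-(G r)) := by ring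
      rw [this]
      exact mul_nonpos_of_nonpos_of_nonneg (by linarith) hexp.le
    have hanti : AntitoneOn g (Set.Ici s₀) := by
      apply antitoneOn_of_deriv_nonpos (convex_Ici s₀)
      · intro r hr
        exact ((hgderiv r hr).continuousAt).continuousWithinAt
      · intro r hr
        rw [interior_Ici] at hr
        exact (hgderiv r (le_of_lt hr)).differentiableAt.differentiableWithinAt
      · intro r hr
        rw [interior_Ici] at hr
        exact hderiv_nonpos r (le_of_lt hr)
    have hgs : g s ≤ g s₀ := hanti Set.self_mem_Ici hs hs
    have hg0 : g s₀ = x ⬝ᵥ x := by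
      simp [hg, hf, hG, hΨ0, Matrix.one_mulVec, intervalIntegral.integral_same]
    have hfx : f s ≤ (x ⬝ᵥ x) * Real.exp (G s) := by
      have h := hgs
      rw [hg0] at h
      have hE : (0:ℝ) < Real.exp (-(G s)) := Real.exp_pos _
      have := mul_le_mul_of_nonneg_right h (Real.exp_pos (G s)).le
      rw [mul_assoc, ← Real.exp_add, neg_add_cancel, Real.exp_zero, mul_one] at this
      exact this
    have hExp : Real.exp (G s) ≤ Real.exp γ * Real.exp (-lam * (s - s₀)) := by
      rw [← Real.exp_add]
      apply Real.exp_le_exp.mpr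
      have := hGbound s hs
      linarith
    have hxx : (0:ℝ) ≤ x ⬝ᵥ x := by
      simp only [dotProduct]
      exact Finset.sum_nonneg fun i _ => mul_self_nonneg _
    calc f s ≤ (x ⬝ᵥ x) * Real.exp (G s) := hfx
      _ ≤ (x ⬝ᵥ x) * (Real.exp γ * Real.exp (-lam * (s - s₀))) :=
          mul_le_mul_of_nonneg_left hExp hxx
      _ = Real.exp γ * Real.exp (-lam * (s - s₀)) * (x ⬝ᵥ x) := by ring
  -- conclude the operator norm bound
  intro s hs
  apply ContinuousLinearMap.opNorm_le_bound _ (by positivity)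
  intro y
  set x : Fin p → ℝ := fun i => y i with hx
  have happ : ∀ i, (Matrix.toEuclideanCLM (𝕜 := ℝ) (Ψ s) y) i = (Ψ s *ᵥ x) i := by
    intro i
    rfl
  have hny : ‖y‖ = Real.sqrt (x ⬝ᵥ x) := by
    rw [EuclideanSpace.norm_eq]
    congr 1
    simp [dotProduct, sq, hx]
  have hnTy : ‖Matrix.toEuclideanCLM (𝕜 := ℝ) (Ψ s) y‖
      = Real.sqrt ((Ψ s *ᵥ x) ⬝ᵥ (Ψ s *ᵥ x)) := by
    rw [EuclideanSpace.norm_eq]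
    congr 1
    simp only [dotProduct, Real.norm_eq_abs, sq_abs]
    congr 1
    ext i
    rw [happ i, sq]
  rw [hnTy, hny]
  have hkey := key x s hs
  have := Real.sqrt_le_sqrt hkey
  refine this.trans ?_
  rw [Real.sqrt_mul (by positivity), Real.sqrt_mul (Real.exp_pos γ).le]
  rw [← Real.exp_half, ← Real.exp_half]
  have : -lam * (s - s₀) / 2 = -(lam / 2) * (s - s₀) := by ring
  rw [this, mul_assoc]
end

section
/- Let A₂ = [[−2, 0], [0, −3]], 𝓐₂ = [[0, 1], [−6, −5]] ∈ M_{2×2}(ℝ), B₂ = (1, 1)ᵀ, 𝓑₂ = (5, 2)ᵀ ∈ ℝ². Then for every τ > 0 and every x = (x₁, x₂)ᵀ ∈ ℝ², 𝓑₂ᵀ · exp(τ 𝓐₂) · x − B₂ᵀ · exp(τ A₂) · x = 2 x₁ ( e^{−2τ} + e^{−3τ} ) + x₂ e^{−2τ}, where exp denotes the matrix exponential. In particular, this expression is strictly positive whenever x₁ > 0 and x₂ > 0. -/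
open Matrix NormedSpace

lemma diag2 (a b : ℝ) : (diagonal ![a, b] : Matrix (Fin 2) (Fin 2) ℝ) = !![a, 0; 0, b] := by
  ext i j; fin_cases i <;> fin_cases j <;> simp [Matrix.diagonal_apply]

lemma exp_diag2 (a b : ℝ) :
    exp (diagonal ![a, b] : Matrix (Fin 2) (Fin 2) ℝ) = !![Real.exp a, 0; 0, Real.exp b] := by
  rw [Matrix.exp_diagonal]
  have : (exp ![a, b] : Fin 2 → ℝ) = ![Real.exp a, Real.exp b] := by
    funext i
    rw [Pi.coe_exp]
    fin_cases i <;> simp [Real.exp_eq_exp_ℝ]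
  rw [this, diag2]

lemma expA_diag (τ : ℝ) :
    exp (τ • !![(-2 : ℝ), 0; 0, -3]) =
      !![Real.exp (-2*τ), 0; 0, Real.exp (-3*τ)] := by
  have h : τ • !![(-2 : ℝ), 0; 0, -3] = diagonal ![-2*τ, -3*τ] := by
    rw [diag2]; ext i j
    fin_cases i <;> fin_cases j <;> simp [Matrix.smul_apply] <;> ring
  rw [h, exp_diag2]

lemma expB_conj (τ : ℝ) :
    exp (τ • !![(0 : ℝ), 1; -6, -5]) =
      !![3 * Real.exp (-2*τ) - 2 * Real.exp (-3*τ), Real.exp (-2*τ) - Real.exp (-3*τ);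
         -6 * Real.exp (-2*τ) + 6 * Real.exp (-3*τ), -2 * Real.exp (-2*τ) + 3 * Real.exp (-3*τ)] := by
  have hP : IsUnit (!![(1 : ℝ), 1; -2, -3]) := by
    apply (isUnit_iff_isUnit_det _).mpr
    rw [Matrix.det_fin_two_of]; norm_num
  have hPinv : (!![(1 : ℝ), 1; -2, -3])⁻¹ = !![(3 : ℝ), 1; -2, -1] := by
    rw [Matrix.inv_def]
    ext i j
    fin_cases i <;> fin_cases j <;>
      simp [Matrix.det_fin_two_of, Matrix.adjugate_fin_two] <;> norm_num
  have h : τ • !![(0 : ℝ), 1; -6, -5] =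
      !![(1 : ℝ), 1; -2, -3] * diagonal ![-2*τ, -3*τ] * (!![(1 : ℝ), 1; -2, -3])⁻¹ := by
    rw [hPinv, diag2]
    ext i j
    fin_cases i <;> fin_cases j <;>
      simp [Matrix.mul_apply, Fin.sum_univ_two, Matrix.smul_apply] <;> ring
  have key := Matrix.exp_conj (!![(1 : ℝ), 1; -2, -3]) (diagonal ![-2*τ, -3*τ]) hP
  rw [h, key, exp_diag2, hPinv]
  ext i j
  fin_cases i <;> fin_cases j <;>
    simp [Matrix.mul_apply, Fin.sum_univ_two] <;> ring

/-- The explicit matrix exponential computation from the CARMA vs. state space counterexample: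
for `A₂ = diag(−2,−3)`, `𝓐₂ = [[0,1],[−6,−5]]`, `B₂ = (1,1)ᵀ`, `𝓑₂ = (5,2)ᵀ`, one has
`𝓑₂ᵀ e^{τ𝓐₂} x − B₂ᵀ e^{τA₂} x = 2x₁(e^{−2τ} + e^{−3τ}) + x₂ e^{−2τ}`, which is strictly
positive whenever `x₁ > 0` and `x₂ > 0`. -/
theorem carma_state_space_counterexample_exp
    (τ : ℝ) (hτ : 0 < τ) (x : Fin 2 → ℝ) :
    (![(5 : ℝ), 2] ⬝ᵥ (exp (τ • !![(0 : ℝ), 1; -6, -5])).mulVec x -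
        ![(1 : ℝ), 1] ⬝ᵥ (exp (τ • !![(-2 : ℝ), 0; 0, -3])).mulVec x =
      2 * x 0 * (Real.exp (-2 * τ) + Real.exp (-3 * τ)) + x 1 * Real.exp (-2 * τ)) ∧
    (0 < x 0 → 0 < x 1 →
      0 < ![(5 : ℝ), 2] ⬝ᵥ (exp (τ • !![(0 : ℝ), 1; -6, -5])).mulVec x -
        ![(1 : ℝ), 1] ⬝ᵥ (exp (τ • !![(-2 : ℝ), 0; 0, -3])).mulVec x) := by
  have heq : ![(5 : ℝ), 2] ⬝ᵥ (exp (τ • !![(0 : ℝ), 1; -6, -5])).mulVec x -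
        ![(1 : ℝ), 1] ⬝ᵥ (exp (τ • !![(-2 : ℝ), 0; 0, -3])).mulVec x =
      2 * x 0 * (Real.exp (-2 * τ) + Real.exp (-3 * τ)) + x 1 * Real.exp (-2 * τ) := by
    rw [expA_diag, expB_conj]
    simp [Matrix.mulVec, dotProduct, Fin.sum_univ_two]
    ring
  refine ⟨heq, fun h0 h1 => ?_⟩
  rw [heq]
  have e1 := Real.exp_pos (-2 * τ)
  have e2 := Real.exp_pos (-3 * τ)
  positivity
end

section
/- Fix K > 0 and let A_N⁰ : ℝ × ℝ → ℂ (N ∈ ℕ) be jointly measurable such that for every r ∈ ℝ and every N ∈ ℕ, the map μ ↦ A_N⁰(r, μ) is differentiable everywhere, and both μ ↦ A_N⁰(r, μ) and μ ↦ ∂_μ A_N⁰(r, μ) lie in L²(ℝ) with L²-norms at most K. Then for every t ∈ ℝ and every N ∈ ℕ, ∫_ℝ | ∫_ℝ e^{iμs} · A_N⁰(N(t + s/(2N)), μ) · conj( A_N⁰(N(t − s/(2N)), μ) ) dμ |² ds ≤ 10 K⁴. (The inner μ-integral converges absolutely by the Cauchy–Schwarz inequality.) -/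
open MeasureTheory Filter

open Set Complex in
private lemma wv_holder_aux {K : ℝ} (hK : 0 ≤ K) {f g : ℝ → ℂ}
    (hf : MemLp f 2 (volume : Measure ℝ)) (hfK : eLpNorm f 2 (volume : Measure ℝ) ≤ ENNReal.ofReal K)
    (hg : MemLp g 2 (volume : Measure ℝ)) (hgK : eLpNorm g 2 (volume : Measure ℝ) ≤ ENNReal.ofReal K) :
    Integrable (fun μ => f μ * g μ) (volume : Measure ℝ) ∧
      (∫ μ : ℝ, ‖f μ * g μ‖) ≤ K * K := by
  have hmeas : AEStronglyMeasurable (fun μ => f μ * g μ) (volume : Measure ℝ) := hf.1.mul hg.1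
  have h1 : eLpNorm (fun μ => f μ * g μ) 1 (volume : Measure ℝ)
      ≤ eLpNorm f 2 volume * eLpNorm g 2 volume := by
    have : ENNReal.HolderTriple 2 2 1 := ⟨by rw [inv_one, ENNReal.inv_two_add_inv_two]⟩
    simpa using eLpNorm_le_eLpNorm_mul_eLpNorm'_of_norm (p := 2) (q := 2) (r := 1) hf.1 hg.1 (· * ·) 1
      (Eventually.of_forall fun x => by simp)
  have h2 : eLpNorm (fun μ => f μ * g μ) 1 (volume : Measure ℝ) ≤ ENNReal.ofReal (K * K) := by
    refine h1.trans ?_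
    rw [ENNReal.ofReal_mul hK]
    exact mul_le_mul' hfK hgK
  have hint : Integrable (fun μ => f μ * g μ) (volume : Measure ℝ) :=
    memLp_one_iff_integrable.mp ⟨hmeas, h2.trans_lt ENNReal.ofReal_lt_top⟩
  refine ⟨hint, ?_⟩
  rw [integral_norm_eq_lintegral_enorm hmeas]
  have h3 : (∫⁻ a, ‖f a * g a‖ₑ ∂(volume : Measure ℝ)) ≤ ENNReal.ofReal (K * K) := by
    rw [← eLpNorm_one_eq_lintegral_enorm]; exact h2
  calc (∫⁻ a, ‖f a * g a‖ₑ ∂(volume : Measure ℝ)).toReal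
      ≤ (ENNReal.ofReal (K * K)).toReal := ENNReal.toReal_mono ENNReal.ofReal_ne_top h3
    _ = K * K := ENNReal.toReal_ofReal (mul_nonneg hK hK)

private lemma wv_exp_norm (s μ : ℝ) : ‖Complex.exp (Complex.I * μ * s)‖ = 1 := by
  rw [Complex.norm_exp]
  simp [Complex.mul_re]

open Set Complex in
private lemma wv_exp_mul_aux {h : ℝ → ℂ} (s : ℝ)
    (hint : Integrable h (volume : Measure ℝ)) :
    Integrable (fun μ : ℝ => Complex.exp (Complex.I * μ * s) * h μ) (volume : Measure ℝ) ∧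
      ‖∫ μ : ℝ, Complex.exp (Complex.I * μ * s) * h μ‖ ≤ ∫ μ : ℝ, ‖h μ‖ := by
  have hnorm : ∀ μ : ℝ, ‖Complex.exp (Complex.I * μ * s) * h μ‖ = ‖h μ‖ := fun μ => by
    rw [norm_mul, wv_exp_norm, one_mul]
  have hcont : Continuous fun μ : ℝ => Complex.exp (Complex.I * μ * s) := by
    fun_prop
  have haesm : AEStronglyMeasurable (fun μ : ℝ => Complex.exp (Complex.I * μ * s) * h μ)
      (volume : Measure ℝ) := hcont.aestronglyMeasurable.mul hint.1
  have hi : Integrable (fun μ : ℝ => Complex.exp (Complex.I * μ * s) * h μ) volume :=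
    hint.norm.mono' haesm (Eventually.of_forall fun μ => (hnorm μ).le)
  refine ⟨hi, ?_⟩
  calc ‖∫ μ : ℝ, Complex.exp (Complex.I * μ * s) * h μ‖
      ≤ ∫ μ : ℝ, ‖Complex.exp (Complex.I * μ * s) * h μ‖ := norm_integral_le_integral_norm _
    _ = ∫ μ : ℝ, ‖h μ‖ := integral_congr_ae (Eventually.of_forall hnorm)

open Set Complex in
private lemma wv_ibp_aux {f g : ℝ → ℂ} (s : ℝ)
    (hfd : ∀ μ, DifferentiableAt ℝ f μ) (hgd : ∀ μ, DifferentiableAt ℝ g μ)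
    (hfg : Integrable (fun μ => f μ * (starRingEnd ℂ) (g μ)) (volume : Measure ℝ))
    (hd1 : Integrable (fun μ => deriv f μ * (starRingEnd ℂ) (g μ)) (volume : Measure ℝ))
    (hd2 : Integrable (fun μ => f μ * (starRingEnd ℂ) (deriv g μ)) (volume : Measure ℝ)) :
    (Complex.I * s) * ∫ μ : ℝ, Complex.exp (Complex.I * μ * s) * (f μ * (starRingEnd ℂ) (g μ)) =
      - ∫ μ : ℝ, Complex.exp (Complex.I * μ * s) *
        (deriv f μ * (starRingEnd ℂ) (g μ) + f μ * (starRingEnd ℂ) (deriv g μ)) := by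
  set F : ℝ → ℂ := fun μ => Complex.exp (Complex.I * μ * s) * (f μ * (starRingEnd ℂ) (g μ))
    with hF_def
  set D : ℝ → ℂ := fun μ =>
    deriv f μ * (starRingEnd ℂ) (g μ) + f μ * (starRingEnd ℂ) (deriv g μ) with hD_def
  set F' : ℝ → ℂ := fun μ =>
    (Complex.I * s) * (Complex.exp (Complex.I * μ * s) * (f μ * (starRingEnd ℂ) (g μ))) +
      Complex.exp (Complex.I * μ * s) * D μ with hF'_def
  have hderiv : ∀ μ : ℝ, HasDerivAt F (F' μ) μ := by
    intro μ
    have hid : HasDerivAt (fun y : ℝ => (y : ℂ)) 1 μ := by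
      simpa using (hasDerivAt_id μ).ofReal_comp (z := μ)
    have h0 : HasDerivAt (fun y : ℝ => Complex.I * y * (s : ℂ)) (Complex.I * s) μ := by
      simpa using (hid.const_mul Complex.I).mul_const (s : ℂ)
    have hE : HasDerivAt (fun y : ℝ => Complex.exp (Complex.I * y * s))
        (Complex.exp (Complex.I * μ * s) * (Complex.I * s)) μ := h0.cexp
    have hcg : HasDerivAt (fun y : ℝ => (starRingEnd ℂ) (g y))
        ((starRingEnd ℂ) (deriv g μ)) μ := by
      simpa only [← starRingEnd_apply] using ((hgd μ).hasDerivAt).star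
    have hFG : HasDerivAt (fun y : ℝ => f y * (starRingEnd ℂ) (g y))
        (deriv f μ * (starRingEnd ℂ) (g μ) + f μ * (starRingEnd ℂ) (deriv g μ)) μ :=
      ((hfd μ).hasDerivAt).mul hcg
    have := hE.mul hFG
    convert this using 1
    · rfl
    · rfl
    simp only [F', D]
    ring
  have hFint : Integrable F (volume : Measure ℝ) := (wv_exp_mul_aux s hfg).1
  have hDint : Integrable D (volume : Measure ℝ) := hd1.add hd2
  have hF'int : Integrable F' (volume : Measure ℝ) :=
    ((wv_exp_mul_aux s hfg).1.const_mul (Complex.I * s)).add (wv_exp_mul_aux s hDint).1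
  have hzero : (∫ μ : ℝ, F' μ) = 0 :=
    integral_eq_zero_of_hasDerivAt_of_integrable hderiv hF'int hFint
  have hsplit : (∫ μ : ℝ, F' μ) =
      (Complex.I * s) * (∫ μ : ℝ, Complex.exp (Complex.I * μ * s) * (f μ * (starRingEnd ℂ) (g μ)))
        + ∫ μ : ℝ, Complex.exp (Complex.I * μ * s) * D μ := by
    rw [hF'_def]
    rw [integral_add ((wv_exp_mul_aux s hfg).1.const_mul (Complex.I * s)) (wv_exp_mul_aux s hDint).1,
      integral_const_mul]
  rw [hsplit] at hzero
  linear_combination hzero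

open Set Complex in
/-- A priori bound from the proof of Theorem 5.2: if the transfer functions `A_N⁰(r,·)` and
their derivatives lie in `L²(ℝ)` with norms at most `K`, then the squared `L²`-norm (in `s`) of
the inner Fourier integrals is bounded by `10 K⁴`. -/
theorem wigner_ville_spectrum_apriori_bound
    (K : ℝ) (hK : 0 < K)
    (A0 : ℕ → ℝ → ℝ → ℂ)
    (hmeas : ∀ N : ℕ, Measurable (Function.uncurry (A0 N)))
    (hdiff : ∀ (r : ℝ) (N : ℕ), 1 ≤ N → ∀ μ : ℝ, DifferentiableAt ℝ (A0 N r) μ)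
    (hL2 : ∀ (r : ℝ) (N : ℕ), 1 ≤ N → MemLp (A0 N r) 2 (volume : Measure ℝ) ∧
      eLpNorm (A0 N r) 2 (volume : Measure ℝ) ≤ ENNReal.ofReal K)
    (hderivL2 : ∀ (r : ℝ) (N : ℕ), 1 ≤ N →
      MemLp (deriv (A0 N r)) 2 (volume : Measure ℝ) ∧
        eLpNorm (deriv (A0 N r)) 2 (volume : Measure ℝ) ≤ ENNReal.ofReal K) :
    ∀ (t : ℝ) (N : ℕ), 1 ≤ N →
      (∫ s : ℝ, ‖∫ μ : ℝ, Complex.exp (Complex.I * μ * s) *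
          (A0 N ((N : ℝ) * (t + s / (2 * (N : ℝ)))) μ *
            (starRingEnd ℂ) (A0 N ((N : ℝ) * (t - s / (2 * (N : ℝ)))) μ))‖ ^ 2) ≤
        10 * K ^ 4 := by
  intro t N hN
  have hK0 : (0:ℝ) ≤ K := hK.le
  -- conjugate membership in L²
  have hconj : ∀ r : ℝ, MemLp (fun μ => (starRingEnd ℂ) (A0 N r μ)) 2 (volume : Measure ℝ) ∧
      eLpNorm (fun μ => (starRingEnd ℂ) (A0 N r μ)) 2 (volume : Measure ℝ) ≤ ENNReal.ofReal K := by
    intro r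
    obtain ⟨hm, hn⟩ := hL2 r N hN
    have haesm : AEStronglyMeasurable (fun μ => (starRingEnd ℂ) (A0 N r μ))
        (volume : Measure ℝ) := by
      simpa only [starRingEnd_apply] using continuous_star.comp_aestronglyMeasurable hm.1
    have heq : eLpNorm (fun μ => (starRingEnd ℂ) (A0 N r μ)) 2 (volume : Measure ℝ)
        = eLpNorm (A0 N r) 2 (volume : Measure ℝ) :=
      eLpNorm_congr_norm_ae (Eventually.of_forall fun x => by simp)
    exact ⟨⟨haesm, heq ▸ hm.2⟩, heq ▸ hn⟩
  have hconjd : ∀ r : ℝ,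
      MemLp (fun μ => (starRingEnd ℂ) (deriv (A0 N r) μ)) 2 (volume : Measure ℝ) ∧
      eLpNorm (fun μ => (starRingEnd ℂ) (deriv (A0 N r) μ)) 2 (volume : Measure ℝ)
        ≤ ENNReal.ofReal K := by
    intro r
    obtain ⟨hm, hn⟩ := hderivL2 r N hN
    have haesm : AEStronglyMeasurable (fun μ => (starRingEnd ℂ) (deriv (A0 N r) μ))
        (volume : Measure ℝ) := by
      simpa only [starRingEnd_apply] using continuous_star.comp_aestronglyMeasurable hm.1
    have heq : eLpNorm (fun μ => (starRingEnd ℂ) (deriv (A0 N r) μ)) 2 (volume : Measure ℝ)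
        = eLpNorm (deriv (A0 N r)) 2 (volume : Measure ℝ) :=
      eLpNorm_congr_norm_ae (Eventually.of_forall fun x => by simp)
    exact ⟨⟨haesm, heq ▸ hm.2⟩, heq ▸ hn⟩
  -- the pointwise bounds
  have bound1 : ∀ s : ℝ,
      ‖∫ μ : ℝ, Complex.exp (Complex.I * μ * s) *
          (A0 N ((N : ℝ) * (t + s / (2 * (N : ℝ)))) μ *
            (starRingEnd ℂ) (A0 N ((N : ℝ) * (t - s / (2 * (N : ℝ)))) μ))‖ ≤ K * K := by
    intro s
    set rp := (N : ℝ) * (t + s / (2 * (N : ℝ)))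
    set rm := (N : ℝ) * (t - s / (2 * (N : ℝ)))
    obtain ⟨hint, hle⟩ := wv_holder_aux hK0 (hL2 rp N hN).1 (hL2 rp N hN).2
      (hconj rm).1 (hconj rm).2
    exact (wv_exp_mul_aux s hint).2.trans hle
  have bound2 : ∀ s : ℝ, s ≠ 0 →
      |s| * ‖∫ μ : ℝ, Complex.exp (Complex.I * μ * s) *
          (A0 N ((N : ℝ) * (t + s / (2 * (N : ℝ)))) μ *
            (starRingEnd ℂ) (A0 N ((N : ℝ) * (t - s / (2 * (N : ℝ)))) μ))‖ ≤ 2 * (K * K) := by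
    intro s _hs
    set rp := (N : ℝ) * (t + s / (2 * (N : ℝ))) with hrp
    set rm := (N : ℝ) * (t - s / (2 * (N : ℝ))) with hrm
    obtain ⟨hfg, _⟩ := wv_holder_aux hK0 (hL2 rp N hN).1 (hL2 rp N hN).2
      (hconj rm).1 (hconj rm).2
    obtain ⟨hd1, hd1le⟩ := wv_holder_aux hK0 (hderivL2 rp N hN).1 (hderivL2 rp N hN).2
      (hconj rm).1 (hconj rm).2
    obtain ⟨hd2, hd2le⟩ := wv_holder_aux hK0 (hL2 rp N hN).1 (hL2 rp N hN).2
      (hconjd rm).1 (hconjd rm).2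
    have hibp := wv_ibp_aux (f := A0 N rp) (g := A0 N rm) s
      (hdiff rp N hN) (hdiff rm N hN) hfg hd1 hd2
    have hnorm_eq : ‖(Complex.I * (s:ℂ)) *
        ∫ μ : ℝ, Complex.exp (Complex.I * μ * s) *
          (A0 N rp μ * (starRingEnd ℂ) (A0 N rm μ))‖
        = |s| * ‖∫ μ : ℝ, Complex.exp (Complex.I * μ * s) *
          (A0 N rp μ * (starRingEnd ℂ) (A0 N rm μ))‖ := by
      rw [norm_mul, norm_mul, Complex.norm_I, one_mul, Complex.norm_real, Real.norm_eq_abs]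
    have hDle : (∫ μ : ℝ, ‖deriv (A0 N rp) μ * (starRingEnd ℂ) (A0 N rm μ) +
        A0 N rp μ * (starRingEnd ℂ) (deriv (A0 N rm) μ)‖) ≤ 2 * (K * K) := by
      calc (∫ μ : ℝ, ‖deriv (A0 N rp) μ * (starRingEnd ℂ) (A0 N rm μ) +
            A0 N rp μ * (starRingEnd ℂ) (deriv (A0 N rm) μ)‖)
          ≤ ∫ μ : ℝ, (‖deriv (A0 N rp) μ * (starRingEnd ℂ) (A0 N rm μ)‖ +
            ‖A0 N rp μ * (starRingEnd ℂ) (deriv (A0 N rm) μ)‖) := by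
            refine integral_mono (hd1.add hd2).norm (hd1.norm.add hd2.norm) ?_
            intro μ; exact norm_add_le _ _
        _ = (∫ μ : ℝ, ‖deriv (A0 N rp) μ * (starRingEnd ℂ) (A0 N rm μ)‖) +
            ∫ μ : ℝ, ‖A0 N rp μ * (starRingEnd ℂ) (deriv (A0 N rm) μ)‖ :=
            integral_add hd1.norm hd2.norm
        _ ≤ K * K + K * K := add_le_add hd1le hd2le
        _ = 2 * (K * K) := by ring
    calc |s| * ‖∫ μ : ℝ, Complex.exp (Complex.I * μ * s) *
          (A0 N rp μ * (starRingEnd ℂ) (A0 N rm μ))‖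
        = ‖(Complex.I * (s:ℂ)) * ∫ μ : ℝ, Complex.exp (Complex.I * μ * s) *
          (A0 N rp μ * (starRingEnd ℂ) (A0 N rm μ))‖ := hnorm_eq.symm
      _ = ‖-∫ μ : ℝ, Complex.exp (Complex.I * μ * s) *
          (deriv (A0 N rp) μ * (starRingEnd ℂ) (A0 N rm μ) +
            A0 N rp μ * (starRingEnd ℂ) (deriv (A0 N rm) μ))‖ := by rw [hibp]
      _ = ‖∫ μ : ℝ, Complex.exp (Complex.I * μ * s) *
          (deriv (A0 N rp) μ * (starRingEnd ℂ) (A0 N rm μ) +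
            A0 N rp μ * (starRingEnd ℂ) (deriv (A0 N rm) μ))‖ := norm_neg _
      _ ≤ ∫ μ : ℝ, ‖deriv (A0 N rp) μ * (starRingEnd ℂ) (A0 N rm μ) +
            A0 N rp μ * (starRingEnd ℂ) (deriv (A0 N rm) μ)‖ :=
          (wv_exp_mul_aux s (hd1.add hd2)).2
      _ ≤ 2 * (K * K) := hDle
  -- the majorant
  set G : ℝ → ℝ := fun s => if |s| ≤ 1 then K ^ 4 else 4 * K ^ 4 * (s ^ 2)⁻¹ with hG_def
  have hG_even : ∀ s : ℝ, G (-s) = G s := by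
    intro s; simp [hG_def, abs_neg, neg_sq]
  have hG_meas : Measurable G := by
    apply Measurable.ite
    · exact measurableSet_le (measurable_abs) measurable_const
    · exact measurable_const
    · fun_prop
  have hIoi1 : IntegrableOn (fun s : ℝ => (s ^ 2)⁻¹) (Ioi (1:ℝ)) volume := by
    have := integrableOn_Ioi_rpow_of_lt (a := (-2:ℝ)) (by norm_num) (c := 1) one_pos
    refine this.congr_fun (fun x hx => ?_) measurableSet_Ioi
    have hx0 : (0:ℝ) < x := lt_trans one_pos hx
    beta_reduce
    rw [Real.rpow_neg hx0.le, ← Real.rpow_natCast x 2]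
    norm_num
  have hIoi1_val : (∫ s in Ioi (1:ℝ), (s ^ 2)⁻¹) = 1 := by
    have := integral_Ioi_rpow_of_lt (a := (-2:ℝ)) (by norm_num) (c := 1) one_pos
    rw [show (∫ s in Ioi (1:ℝ), (s ^ 2)⁻¹) = ∫ s in Ioi (1:ℝ), s ^ (-2:ℝ) from ?_, this]
    · norm_num
    · refine setIntegral_congr_fun measurableSet_Ioi (fun x hx => ?_)
      have hx0 : (0:ℝ) < x := lt_trans one_pos hx
      rw [Real.rpow_neg hx0.le, ← Real.rpow_natCast x 2]
      norm_num
  have hG_Ioi : IntegrableOn G (Ioi (0:ℝ)) volume := by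
    have h1 : IntegrableOn G (Ioc (0:ℝ) 1) volume := by
      refine (integrableOn_const measure_Ioc_lt_top.ne).congr_fun
        (f := fun _ => K ^ 4) (fun x hx => ?_) measurableSet_Ioc
      have : |x| ≤ 1 := abs_le.mpr ⟨by linarith [hx.1], hx.2⟩
      simp [hG_def, this]
    have h2 : IntegrableOn G (Ioi (1:ℝ)) volume := by
      have h2' : IntegrableOn (fun x : ℝ => 4 * K ^ 4 * (x ^ 2)⁻¹) (Ioi (1:ℝ)) volume :=
        hIoi1.const_mul (4 * K ^ 4)
      refine h2'.congr_fun (fun x hx => ?_) measurableSet_Ioi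
      have hx1 : (1:ℝ) < x := hx
      have : ¬ |x| ≤ 1 := by rw [abs_of_pos (lt_trans one_pos hx1)]; linarith
      simp [hG_def, this]
    have := h1.union h2
    rwa [Ioc_union_Ioi_eq_Ioi (zero_le_one)] at this
  have hG_Iic : IntegrableOn G (Iic (0:ℝ)) volume := by
    rw [← Measure.map_neg_eq_self (volume : Measure ℝ)]
    have m : MeasurableEmbedding fun x : ℝ => -x :=
      (Homeomorph.neg ℝ).measurableEmbedding
    rw [m.integrableOn_map_iff]
    simp_rw [Function.comp_def, neg_preimage, neg_Iic, neg_zero]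
    refine IntegrableOn.congr_fun (Iff.mpr integrableOn_Ici_iff_integrableOn_Ioi hG_Ioi)
      (fun x _ => (hG_even x).symm) measurableSet_Ici
  have hG_int : Integrable G (volume : Measure ℝ) := by
    have := hG_Iic.union hG_Ioi
    rw [Iic_union_Ioi] at this
    exact integrableOn_univ.mp this
  have hG_val : (∫ s : ℝ, G s) = 10 * K ^ 4 := by
    have hsplit : (∫ s : ℝ, G s) = (∫ s in Iic (0:ℝ), G s) + ∫ s in Ioi (0:ℝ), G s := by
      rw [← setIntegral_union (Iic_disjoint_Ioi le_rfl) measurableSet_Ioi hG_Iic hG_Ioi,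
        Iic_union_Ioi, Measure.restrict_univ]
    have hneg : (∫ s in Iic (0:ℝ), G s) = ∫ s in Ioi (0:ℝ), G s := by
      rw [← neg_zero, ← integral_comp_neg_Iic, neg_zero]
      exact setIntegral_congr_fun measurableSet_Iic (fun x _ => (hG_even x).symm)
    have hIoi : (∫ s in Ioi (0:ℝ), G s) = 5 * K ^ 4 := by
      have hsplit2 : (∫ s in Ioi (0:ℝ), G s)
          = (∫ s in Ioc (0:ℝ) 1, G s) + ∫ s in Ioi (1:ℝ), G s := by
        rw [← setIntegral_union (Ioc_disjoint_Ioi le_rfl) measurableSet_Ioi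
          (hG_Ioi.mono_set Ioc_subset_Ioi_self) (hG_Ioi.mono_set (Ioi_subset_Ioi zero_le_one)),
          Ioc_union_Ioi_eq_Ioi zero_le_one]
      have hv1 : (∫ s in Ioc (0:ℝ) 1, G s) = K ^ 4 := by
        rw [show (∫ s in Ioc (0:ℝ) 1, G s) = ∫ _ in Ioc (0:ℝ) 1, K ^ 4 from
          setIntegral_congr_fun measurableSet_Ioc (fun x hx => by
            have : |x| ≤ 1 := abs_le.mpr ⟨by linarith [hx.1], hx.2⟩
            simp [hG_def, this])]
        simp [Real.volume_Ioc]
      have hv2 : (∫ s in Ioi (1:ℝ), G s) = 4 * K ^ 4 := by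
        rw [show (∫ s in Ioi (1:ℝ), G s) = ∫ s in Ioi (1:ℝ), 4 * K ^ 4 * (s ^ 2)⁻¹ from
          setIntegral_congr_fun measurableSet_Ioi (fun x hx => by
            have hx1 : (1:ℝ) < x := hx
            have : ¬ |x| ≤ 1 := by rw [abs_of_pos (lt_trans one_pos hx1)]; linarith
            simp [hG_def, this]), integral_const_mul, hIoi1_val, mul_one]
      rw [hsplit2, hv1, hv2]; ring
    rw [hsplit, hneg, hIoi]; ring
  -- pointwise comparison
  have hpoint : ∀ s : ℝ,
      ‖∫ μ : ℝ, Complex.exp (Complex.I * μ * s) *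
          (A0 N ((N : ℝ) * (t + s / (2 * (N : ℝ)))) μ *
            (starRingEnd ℂ) (A0 N ((N : ℝ) * (t - s / (2 * (N : ℝ)))) μ))‖ ^ 2 ≤ G s := by
    intro s
    set v : ℝ := ‖∫ μ : ℝ, Complex.exp (Complex.I * μ * s) *
          (A0 N ((N : ℝ) * (t + s / (2 * (N : ℝ)))) μ *
            (starRingEnd ℂ) (A0 N ((N : ℝ) * (t - s / (2 * (N : ℝ)))) μ))‖ with hv
    have hv0 : 0 ≤ v := norm_nonneg _
    by_cases hs : |s| ≤ 1
    · have h1 := bound1 s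
      rw [← hv] at h1
      have hG : G s = K ^ 4 := by simp only [hG_def, if_pos hs]
      rw [hG]
      nlinarith
    · have hs1 : (1:ℝ) < |s| := lt_of_not_ge hs
      have hsne : s ≠ 0 := by
        intro h; rw [h, abs_zero] at hs1; linarith
      have h2 := bound2 s hsne
      rw [← hv] at h2
      have hG : G s = 4 * K ^ 4 * (s ^ 2)⁻¹ := by simp only [hG_def, if_neg hs]
      rw [hG]
      have hspos : (0:ℝ) < s ^ 2 := by positivity
      have habs : (0:ℝ) < |s| := lt_trans one_pos hs1
      have hvle : |s| * v ≤ 2 * (K * K) := h2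
      have key : (|s| * v) * (|s| * v) ≤ (2 * (K * K)) * (2 * (K * K)) :=
        mul_le_mul hvle hvle (by positivity) (by positivity)
      have hsq : |s| * |s| = s ^ 2 := by rw [← _root_.sq_abs s]; ring
      have hmain : v ^ 2 * s ^ 2 ≤ 4 * K ^ 4 := by nlinarith
      rw [show (4 * K ^ 4 * (s ^ 2)⁻¹ : ℝ) = 4 * K ^ 4 / s ^ 2 from (div_eq_mul_inv _ _).symm,
        le_div_iff₀ hspos]
      linarith
  -- assemble
  calc (∫ s : ℝ, ‖∫ μ : ℝ, Complex.exp (Complex.I * μ * s) *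
          (A0 N ((N : ℝ) * (t + s / (2 * (N : ℝ)))) μ *
            (starRingEnd ℂ) (A0 N ((N : ℝ) * (t - s / (2 * (N : ℝ)))) μ))‖ ^ 2)
      ≤ ∫ s : ℝ, G s := by
        refine integral_mono_of_nonneg (Eventually.of_forall fun s => ?_) hG_int
          (Eventually.of_forall hpoint)
        positivity
    _ = 10 * K ^ 4 := hG_val
end
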